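/- arXiv:math/0511657 — 8 statements merged into one kernel-verified Lean document; each statement's English description precedes it below -/
import Mathlib

section
/- Let V be a real vector space with a paraquaternionic triple (J₁, J₂, J₃), and let S : V → End_ℝ(V) be an ℝ-linear map admitting a decomposition S_X = S⁰_X + s¹(X)·J₁ + s²(X)·J₂ + s³(X)·J₃ with S⁰_X commuting with each Jₐ. Then the following are equivalent: (i) for every X ∈ V and every J = c₁J₁ + c₂J₂ + c₃J₃ with c₁² + c₂² − c₃² = −1 one has J∘[S_X, J] = −[S_{J X}, J]; (ii) s¹ = s² = s³ = 0; (iii) for every X ∈ V and every P = b₁J₁ + b₂J₂ + b₃J₃ with b₁² + b₂² − b₃² = 1 one has P∘[S_X, P] = −[S_{P X}, P]. (This is the algebraic core of Corollary 3.3: conditions (i) and (iii) express the coincidence of the second almost complex structures I₂^∇ on the twistor space, respectively the second almost paracomplex structures P₂^∇ on the reflector space, for two para-quaternionic connections with difference tensor S.) -/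
set_option maxHeartbeats 2000000 in
/-- Corollary 3.3 (algebraic core): for a paraquaternionic triple `(J₁, J₂, J₃)` on a real
vector space `V` and a linear map `S : V → End ℝ V` decomposing as
`S_X = S⁰_X + s¹(X)J₁ + s²(X)J₂ + s³(X)J₃` with `S⁰_X` commuting with each `Jₐ`,
the following are equivalent:
(i) `J ∘ [S_X, J] = −[S_{JX}, J]` for every `J = c₁J₁ + c₂J₂ + c₃J₃` with
`c₁² + c₂² − c₃² = −1`;
(ii) `s¹ = s² = s³ = 0`;
(iii) `P ∘ [S_X, P] = −[S_{PX}, P]` for every `P = b₁J₁ + b₂J₂ + b₃J₃` with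
`b₁² + b₂² − b₃² = 1`. -/
theorem twistor_reflector_I2_coincide_iff
    {V : Type*} [AddCommGroup V] [Module ℝ V]
    (J1 J2 J3 : Module.End ℝ V)
    (h1 : J1 * J1 = 1) (h2 : J2 * J2 = 1) (h3 : J3 * J3 = -1)
    (h12 : J1 * J2 = J3) (h21 : J2 * J1 = -J3)
    (S : V →ₗ[ℝ] Module.End ℝ V)
    (S0 : V → Module.End ℝ V) (s1 s2 s3 : V →ₗ[ℝ] ℝ)
    (hS : ∀ X : V, S X = S0 X + s1 X • J1 + s2 X • J2 + s3 X • J3)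
    (hc1 : ∀ X : V, Commute (S0 X) J1) (hc2 : ∀ X : V, Commute (S0 X) J2)
    (hc3 : ∀ X : V, Commute (S0 X) J3) :
    List.TFAE
      [ (∀ (X : V) (J : Module.End ℝ V),
          (∃ c1 c2 c3 : ℝ, c1 ^ 2 + c2 ^ 2 - c3 ^ 2 = -1 ∧
            J = c1 • J1 + c2 • J2 + c3 • J3) →
          J * (S X * J - J * S X) = -(S (J X) * J - J * S (J X))),
        (s1 = 0 ∧ s2 = 0 ∧ s3 = 0),
        (∀ (X : V) (P : Module.End ℝ V),
          (∃ b1 b2 b3 : ℝ, b1 ^ 2 + b2 ^ 2 - b3 ^ 2 = 1 ∧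
            P = b1 • J1 + b2 • J2 + b3 • J3) →
          P * (S X * P - P * S X) = -(S (P X) * P - P * S (P X))) ] := by
  have h13 : J1 * J3 = J2 := by rw [← h12, ← mul_assoc, h1, one_mul]
  have h32 : J3 * J2 = J1 := by rw [← h12, mul_assoc, h2, mul_one]
  have h31 : J3 * J1 = -J2 := by rw [← h12, mul_assoc, h21, mul_neg, h13]
  have h23 : J2 * J3 = -J1 := by rw [← h12, ← mul_assoc, h21, neg_mul, h32]
  have prodid : ∀ (u1 u2 u3 a b c : ℝ),
      (a•J1+b•J2+c•J3) * ((u1•J1+u2•J2+u3•J3)*(a•J1+b•J2+c•J3)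
        - (a•J1+b•J2+c•J3)*(u1•J1+u2•J2+u3•J3))
      = (2*(u1*(c^2-b^2)+u2*a*b-u3*a*c))•J1 + (2*(u1*a*b+u2*(c^2-a^2)-u3*b*c))•J2
        + (2*(u1*a*c+u2*b*c-u3*(a^2+b^2)))•J3 := by
    intro u1 u2 u3 a b c
    simp only [mul_sub, sub_mul, add_mul, mul_add, smul_mul_assoc, mul_smul_comm,
      h1, h2, h3, h12, h21, h13, h31, h23, h32, smul_neg, mul_one, mul_neg, neg_mul]
    module
  have commid : ∀ (t1 t2 t3 a b c : ℝ),
      (t1•J1+t2•J2+t3•J3)*(a•J1+b•J2+c•J3) - (a•J1+b•J2+c•J3)*(t1•J1+t2•J2+t3•J3)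
      = (-2*(t2*c-t3*b))•J1 + (2*(t1*c-t3*a))•J2 + (2*(t1*b-t2*a))•J3 := by
    intro t1 t2 t3 a b c
    simp only [sub_mul, mul_sub, add_mul, mul_add, smul_mul_assoc, mul_smul_comm,
      h1, h2, h3, h12, h21, h13, h31, h23, h32, smul_neg, mul_one, mul_neg, neg_mul]
    module
  have sone : (∃ v : V, v ≠ 0) → ∀ r : ℝ, r • (1 : Module.End ℝ V) = 0 → r = 0 := by
    rintro ⟨v, hv⟩ r h
    have := DFunLike.congr_fun h v
    simp only [LinearMap.smul_apply, Module.End.one_apply, LinearMap.zero_apply] at this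
    rcases smul_eq_zero.mp this with h' | h'
    · exact h'
    · exact absurd h' hv
  have indep : (∃ v : V, v ≠ 0) → ∀ a b c d : ℝ,
      a•(1 : Module.End ℝ V) + b•J1 + c•J2 + d•J3 = 0 →
      a = 0 ∧ b = 0 ∧ c = 0 ∧ d = 0 := by
    intro hv a b c d h
    have hA : J1 * (a•(1 : Module.End ℝ V) + b•J1 + c•J2 + d•J3) * J1
        = a•(1 : Module.End ℝ V) + b•J1 - c•J2 - d•J3 := by
      simp only [mul_add, add_mul, mul_smul_comm, smul_mul_assoc, mul_one, one_mul,
        h1, h2, h3, h12, h21, h13, h31, h23, h32, smul_neg, mul_neg, neg_mul]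
      module
    rw [h, mul_zero, zero_mul] at hA
    have hab : (2*a)•(1 : Module.End ℝ V) + (2*b)•J1 = 0 := by
      calc (2*a)•(1 : Module.End ℝ V) + (2*b)•J1
          = (a•(1 : Module.End ℝ V) + b•J1 + c•J2 + d•J3)
            + (a•(1 : Module.End ℝ V) + b•J1 - c•J2 - d•J3) := by module
        _ = 0 := by rw [h, ← hA]; exact zero_add 0
    have hB : J2 * ((2*a)•(1 : Module.End ℝ V) + (2*b)•J1) * J2
        = (2*a)•(1 : Module.End ℝ V) - (2*b)•J1 := by
      simp only [mul_add, add_mul, mul_smul_comm, smul_mul_assoc, mul_one, one_mul,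
        h1, h2, h3, h12, h21, h13, h31, h23, h32, smul_neg, mul_neg, neg_mul]
      module
    rw [hab, mul_zero, zero_mul] at hB
    have ha : a = 0 := by
      have h4 : (4*a)•(1 : Module.End ℝ V) = 0 := by
        calc (4*a)•(1 : Module.End ℝ V)
            = ((2*a)•(1 : Module.End ℝ V) + (2*b)•J1)
              + ((2*a)•(1 : Module.End ℝ V) - (2*b)•J1) := by module
          _ = 0 := by rw [hab, ← hB]; exact zero_add 0
      have := sone hv (4*a) h4
      linarith
    have hb : b = 0 := by
      have hbj : (2*b)•J1 = 0 := by
        have := hab; rw [ha] at this; simpa using this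
      have : (2*b)•(1 : Module.End ℝ V) = 0 := by
        calc (2*b)•(1 : Module.End ℝ V) = ((2*b)•J1) * J1 := by
              rw [smul_mul_assoc, h1]
          _ = 0 := by rw [hbj, zero_mul]
      have := sone hv (2*b) this
      linarith
    have hcd : c•J2 + d•J3 = 0 := by
      have := h; rw [ha, hb] at this; simpa using this
    have hC : J2 * (c•J2 + d•J3) * J2 = c•J2 - d•J3 := by
      simp only [mul_add, add_mul, mul_smul_comm, smul_mul_assoc, mul_one, one_mul,
        h1, h2, h3, h12, h21, h13, h31, h23, h32, smul_neg, mul_neg, neg_mul]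
      module
    rw [hcd, mul_zero, zero_mul] at hC
    have hc : c = 0 := by
      have hcj : (2*c)•J2 = 0 := by
        calc (2*c)•J2 = (c•J2 + d•J3) + (c•J2 - d•J3) := by module
          _ = 0 := by rw [hcd, ← hC]; exact zero_add 0
      have : (2*c)•(1 : Module.End ℝ V) = 0 := by
        calc (2*c)•(1 : Module.End ℝ V) = ((2*c)•J2) * J2 := by
              rw [smul_mul_assoc, h2]
          _ = 0 := by rw [hcj, zero_mul]
      have := sone hv (2*c) this
      linarith
    have hd : d = 0 := by
      have hdj : d•J3 = 0 := by
        have := hcd; rw [hc] at this; simpa using this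
      have : d•(1 : Module.End ℝ V) = 0 := by
        have h0 : (d•J3) * J3 = 0 := by rw [hdj, zero_mul]
        rw [smul_mul_assoc, h3] at h0
        calc d•(1 : Module.End ℝ V) = -(d • (-1 : Module.End ℝ V)) := by module
          _ = 0 := by rw [h0, neg_zero]
      exact sone hv d this
    exact ⟨ha, hb, hc, hd⟩
  have hcomm : ∀ (Y : V) (a b c : ℝ), Commute (S0 Y) (a•J1+b•J2+c•J3) :=
    fun Y a b c => (((hc1 Y).smul_right a).add_right ((hc2 Y).smul_right b)).add_right
      ((hc3 Y).smul_right c)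
  have hred : ∀ (Y : V) (a b c : ℝ),
      S Y * (a•J1+b•J2+c•J3) - (a•J1+b•J2+c•J3) * S Y
      = (s1 Y•J1+s2 Y•J2+s3 Y•J3) * (a•J1+b•J2+c•J3)
        - (a•J1+b•J2+c•J3) * (s1 Y•J1+s2 Y•J2+s3 Y•J3) := by
    intro Y a b c
    have hc := (hcomm Y a b c).eq
    calc S Y * (a•J1+b•J2+c•J3) - (a•J1+b•J2+c•J3) * S Y
        = (S0 Y * (a•J1+b•J2+c•J3) - (a•J1+b•J2+c•J3) * S0 Y)
          + ((s1 Y•J1+s2 Y•J2+s3 Y•J3) * (a•J1+b•J2+c•J3)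
            - (a•J1+b•J2+c•J3) * (s1 Y•J1+s2 Y•J2+s3 Y•J3)) := by
          rw [hS Y]; simp only [add_mul, mul_add]; abel
      _ = _ := by rw [hc]; abel
  have main : (∃ v : V, v ≠ 0) → ∀ (Y : V) (a b c : ℝ),
      ((a•J1+b•J2+c•J3) * (S Y * (a•J1+b•J2+c•J3) - (a•J1+b•J2+c•J3) * S Y)
        = -(S ((a•J1+b•J2+c•J3) Y) * (a•J1+b•J2+c•J3)
            - (a•J1+b•J2+c•J3) * S ((a•J1+b•J2+c•J3) Y))) →
      (s1 Y*(c^2-b^2)+s2 Y*a*b-s3 Y*a*c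
        = (a*s2 (J1 Y)+b*s2 (J2 Y)+c*s2 (J3 Y))*c - (a*s3 (J1 Y)+b*s3 (J2 Y)+c*s3 (J3 Y))*b)
      ∧ (s1 Y*a*b+s2 Y*(c^2-a^2)-s3 Y*b*c
        = -(a*s1 (J1 Y)+b*s1 (J2 Y)+c*s1 (J3 Y))*c + (a*s3 (J1 Y)+b*s3 (J2 Y)+c*s3 (J3 Y))*a)
      ∧ (s1 Y*a*c+s2 Y*b*c-s3 Y*(a^2+b^2)
        = -(a*s1 (J1 Y)+b*s1 (J2 Y)+c*s1 (J3 Y))*b + (a*s2 (J1 Y)+b*s2 (J2 Y)+c*s2 (J3 Y))*a) := by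
    intro hv Y a b c h
    have hJY1 : s1 ((a•J1+b•J2+c•J3) Y) = a*s1 (J1 Y)+b*s1 (J2 Y)+c*s1 (J3 Y) := by
      simp [LinearMap.add_apply, LinearMap.smul_apply, map_add, map_smul, smul_eq_mul]
    have hJY2 : s2 ((a•J1+b•J2+c•J3) Y) = a*s2 (J1 Y)+b*s2 (J2 Y)+c*s2 (J3 Y) := by
      simp [LinearMap.add_apply, LinearMap.smul_apply, map_add, map_smul, smul_eq_mul]
    have hJY3 : s3 ((a•J1+b•J2+c•J3) Y) = a*s3 (J1 Y)+b*s3 (J2 Y)+c*s3 (J3 Y) := by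
      simp [LinearMap.add_apply, LinearMap.smul_apply, map_add, map_smul, smul_eq_mul]
    rw [hred Y a b c, hred ((a•J1+b•J2+c•J3) Y) a b c, prodid, commid, hJY1, hJY2, hJY3] at h
    obtain ⟨-, e1, e2, e3⟩ := indep hv 0
      (2*(s1 Y*(c^2-b^2)+s2 Y*a*b-s3 Y*a*c)
        + (-2*((a*s2 (J1 Y)+b*s2 (J2 Y)+c*s2 (J3 Y))*c - (a*s3 (J1 Y)+b*s3 (J2 Y)+c*s3 (J3 Y))*b)))
      (2*(s1 Y*a*b+s2 Y*(c^2-a^2)-s3 Y*b*c)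
        + 2*((a*s1 (J1 Y)+b*s1 (J2 Y)+c*s1 (J3 Y))*c - (a*s3 (J1 Y)+b*s3 (J2 Y)+c*s3 (J3 Y))*a))
      (2*(s1 Y*a*c+s2 Y*b*c-s3 Y*(a^2+b^2))
        + 2*((a*s1 (J1 Y)+b*s1 (J2 Y)+c*s1 (J3 Y))*b - (a*s2 (J1 Y)+b*s2 (J2 Y)+c*s2 (J3 Y))*a))
      (by
        calc (0:ℝ)•(1 : Module.End ℝ V)
            + (2*(s1 Y*(c^2-b^2)+s2 Y*a*b-s3 Y*a*c)
              + (-2*((a*s2 (J1 Y)+b*s2 (J2 Y)+c*s2 (J3 Y))*c - (a*s3 (J1 Y)+b*s3 (J2 Y)+c*s3 (J3 Y))*b)))•J1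
            + (2*(s1 Y*a*b+s2 Y*(c^2-a^2)-s3 Y*b*c)
              + 2*((a*s1 (J1 Y)+b*s1 (J2 Y)+c*s1 (J3 Y))*c - (a*s3 (J1 Y)+b*s3 (J2 Y)+c*s3 (J3 Y))*a))•J2
            + (2*(s1 Y*a*c+s2 Y*b*c-s3 Y*(a^2+b^2))
              + 2*((a*s1 (J1 Y)+b*s1 (J2 Y)+c*s1 (J3 Y))*b - (a*s2 (J1 Y)+b*s2 (J2 Y)+c*s2 (J3 Y))*a))•J3
            = ((2*(s1 Y*(c^2-b^2)+s2 Y*a*b-s3 Y*a*c))•J1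
                + (2*(s1 Y*a*b+s2 Y*(c^2-a^2)-s3 Y*b*c))•J2
                + (2*(s1 Y*a*c+s2 Y*b*c-s3 Y*(a^2+b^2)))•J3)
              - -((-2*((a*s2 (J1 Y)+b*s2 (J2 Y)+c*s2 (J3 Y))*c - (a*s3 (J1 Y)+b*s3 (J2 Y)+c*s3 (J3 Y))*b))•J1
                + (2*((a*s1 (J1 Y)+b*s1 (J2 Y)+c*s1 (J3 Y))*c - (a*s3 (J1 Y)+b*s3 (J2 Y)+c*s3 (J3 Y))*a))•J2
                + (2*((a*s1 (J1 Y)+b*s1 (J2 Y)+c*s1 (J3 Y))*b - (a*s2 (J1 Y)+b*s2 (J2 Y)+c*s2 (J3 Y))*a))•J3) := by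
              module
          _ = 0 := sub_eq_zero_of_eq h)
    exact ⟨by linarith, by linarith, by linarith⟩
  have zerocase : ∀ X : V, (¬ ∃ v : V, v ≠ 0) → s1 X = 0 ∧ s2 X = 0 ∧ s3 X = 0 := by
    intro X hv
    push_neg at hv
    rw [hv X]
    simp
  have r11 : ∀ X : V, J1 (J1 X) = X := by
    intro X; rw [← Module.End.mul_apply, h1, Module.End.one_apply]
  have r21 : ∀ X : V, J2 (J1 X) = -(J3 X) := by
    intro X; rw [← Module.End.mul_apply, h21, LinearMap.neg_apply]
  have r31 : ∀ X : V, J3 (J1 X) = -(J2 X) := by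
    intro X; rw [← Module.End.mul_apply, h31, LinearMap.neg_apply]
  have r12 : ∀ X : V, J1 (J2 X) = J3 X := by
    intro X; rw [← Module.End.mul_apply, h12]
  have r22 : ∀ X : V, J2 (J2 X) = X := by
    intro X; rw [← Module.End.mul_apply, h2, Module.End.one_apply]
  have r32 : ∀ X : V, J3 (J2 X) = J1 X := by
    intro X; rw [← Module.End.mul_apply, h32]
  have r13 : ∀ X : V, J1 (J3 X) = J2 X := by
    intro X; rw [← Module.End.mul_apply, h13]
  have r23 : ∀ X : V, J2 (J3 X) = -(J1 X) := by
    intro X; rw [← Module.End.mul_apply, h23, LinearMap.neg_apply]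
  have r33 : ∀ X : V, J3 (J3 X) = -X := by
    intro X; rw [← Module.End.mul_apply, h3, LinearMap.neg_apply, Module.End.one_apply]
  tfae_have 2 → 1
  · rintro ⟨e1, e2, e3⟩ X J ⟨a, b, c, -, rfl⟩
    rw [hred X a b c, hred ((a•J1+b•J2+c•J3) X) a b c]
    simp [e1, e2, e3]
  tfae_have 2 → 3
  · rintro ⟨e1, e2, e3⟩ X P ⟨a, b, c, -, rfl⟩
    rw [hred X a b c, hred ((a•J1+b•J2+c•J3) X) a b c]
    simp [e1, e2, e3]
  tfae_have 1 → 2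
  · intro hi
    have key : ∀ X : V, s1 X = 0 ∧ s2 X = 0 ∧ s3 X = 0 := by
      intro X
      by_cases hv : ∃ v : V, v ≠ 0
      swap
      · exact zerocase X hv
      have I0 := main hv (J2 X) (-3/4:ℝ) 0 (5/4) (hi (J2 X) _ ⟨(-3/4:ℝ), 0, (5/4), by norm_num, rfl⟩)
      have I1 := main hv (J2 X) (0:ℝ) (3/4) (5/4) (hi (J2 X) _ ⟨(0:ℝ), (3/4), (5/4), by norm_num, rfl⟩)
      have I2 := main hv (J2 X) (0:ℝ) (-3/4) (5/4) (hi (J2 X) _ ⟨(0:ℝ), (-3/4), (5/4), by norm_num, rfl⟩)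
      have I3 := main hv (J3 X) (-3/4:ℝ) 0 (5/4) (hi (J3 X) _ ⟨(-3/4:ℝ), 0, (5/4), by norm_num, rfl⟩)
      have I4 := main hv (J3 X) (0:ℝ) (3/4) (5/4) (hi (J3 X) _ ⟨(0:ℝ), (3/4), (5/4), by norm_num, rfl⟩)
      have I5 := main hv (J3 X) (0:ℝ) (-3/4) (5/4) (hi (J3 X) _ ⟨(0:ℝ), (-3/4), (5/4), by norm_num, rfl⟩)
      simp only [r11, r21, r31, r12, r22, r32, r13, r23, r33, map_neg] at I0 I1 I2 I3 I4 I5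
      refine ⟨by linarith [I0.1,
        I0.2.1,
        I0.2.2,
        I1.1,
        I1.2.1,
        I1.2.2,
        I2.1,
        I2.2.1,
        I2.2.2,
        I3.1,
        I3.2.1,
        I3.2.2,
        I4.1,
        I4.2.1,
        I4.2.2,
        I5.1,
        I5.2.1,
        I5.2.2],
        by linarith [I0.1,
        I0.2.1,
        I0.2.2,
        I1.1,
        I1.2.1,
        I1.2.2,
        I2.1,
        I2.2.1,
        I2.2.2,
        I3.1,
        I3.2.1,
        I3.2.2,
        I4.1,
        I4.2.1,
        I4.2.2,
        I5.1,
        I5.2.1,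
        I5.2.2],
        by linarith [I0.1,
        I0.2.1,
        I0.2.2,
        I1.1,
        I1.2.1,
        I1.2.2,
        I2.1,
        I2.2.1,
        I2.2.2,
        I3.1,
        I3.2.1,
        I3.2.2,
        I4.1,
        I4.2.1,
        I4.2.2,
        I5.1,
        I5.2.1,
        I5.2.2]⟩
    exact ⟨LinearMap.ext fun X => (key X).1, LinearMap.ext fun X => (key X).2.1,
      LinearMap.ext fun X => (key X).2.2⟩
  tfae_have 3 → 2
  · intro hiii
    have key : ∀ X : V, s1 X = 0 ∧ s2 X = 0 ∧ s3 X = 0 := by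
      intro X
      by_cases hv : ∃ v : V, v ≠ 0
      swap
      · exact zerocase X hv
      have I0 := main hv (J2 X) (0:ℝ) 1 0 (hiii (J2 X) _ ⟨(0:ℝ), 1, 0, by norm_num, rfl⟩)
      have I1 := main hv (J2 X) (1:ℝ) 1 1 (hiii (J2 X) _ ⟨(1:ℝ), 1, 1, by norm_num, rfl⟩)
      have I2 := main hv (J2 X) (1:ℝ) 1 (-1) (hiii (J2 X) _ ⟨(1:ℝ), 1, (-1), by norm_num, rfl⟩)
      have I3 := main hv (J3 X) (1:ℝ) 0 0 (hiii (J3 X) _ ⟨(1:ℝ), 0, 0, by norm_num, rfl⟩)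
      have I4 := main hv (J3 X) (0:ℝ) 1 0 (hiii (J3 X) _ ⟨(0:ℝ), 1, 0, by norm_num, rfl⟩)
      have I5 := main hv (J3 X) (1:ℝ) 1 1 (hiii (J3 X) _ ⟨(1:ℝ), 1, 1, by norm_num, rfl⟩)
      have I6 := main hv (J3 X) (1:ℝ) 1 (-1) (hiii (J3 X) _ ⟨(1:ℝ), 1, (-1), by norm_num, rfl⟩)
      simp only [r11, r21, r31, r12, r22, r32, r13, r23, r33, map_neg] at I0 I1 I2 I3 I4 I5 I6
      refine ⟨by linarith [I0.1,
        I0.2.1,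
        I0.2.2,
        I1.1,
        I1.2.1,
        I1.2.2,
        I2.1,
        I2.2.1,
        I2.2.2,
        I3.1,
        I3.2.1,
        I3.2.2,
        I4.1,
        I4.2.1,
        I4.2.2,
        I5.1,
        I5.2.1,
        I5.2.2,
        I6.1,
        I6.2.1,
        I6.2.2],
        by linarith [I0.1,
        I0.2.1,
        I0.2.2,
        I1.1,
        I1.2.1,
        I1.2.2,
        I2.1,
        I2.2.1,
        I2.2.2,
        I3.1,
        I3.2.1,
        I3.2.2,
        I4.1,
        I4.2.1,
        I4.2.2,
        I5.1,
        I5.2.1,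
        I5.2.2,
        I6.1,
        I6.2.1,
        I6.2.2],
        by linarith [I0.1,
        I0.2.1,
        I0.2.2,
        I1.1,
        I1.2.1,
        I1.2.2,
        I2.1,
        I2.2.1,
        I2.2.2,
        I3.1,
        I3.2.1,
        I3.2.2,
        I4.1,
        I4.2.1,
        I4.2.2,
        I5.1,
        I5.2.1,
        I5.2.2,
        I6.1,
        I6.2.1,
        I6.2.2]⟩
    exact ⟨LinearMap.ext fun X => (key X).1, LinearMap.ext fun X => (key X).2.1,
      LinearMap.ext fun X => (key X).2.2⟩
  tfae_finish
end

section
/- Let V be a real vector space of dimension 4n (n ≥ 1) with a paraquaternionic triple (J₁, J₂, J₃), let S : V → End_ℝ(V) be an ℝ-linear map admitting a decomposition S_X = S⁰_X + s¹(X)·J₁ + s²(X)·J₂ + s³(X)·J₃ with S⁰_X commuting with each Jₐ, and set D(X,Y) := S_X(Y) − S_Y(X). Then the following are equivalent: (i) s¹(J₁X) = s²(J₂X) = s³(J₃X) for all X ∈ V; (ii) D^{0,2}_K = 0 for every K = c₁J₁ + c₂J₂ + c₃J₃ with c₁² + c₂² − c₃² = −1; (iii) D^{0,2}_K = 0 for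 every K = b₁J₁ + b₂J₂ + b₃J₃ with b₁² + b₂² − b₃² = 1. (This is the algebraic core of Corollary 3.4: the structures I₁^∇, I₁^{∇'} on the twistor space, equivalently P₁^∇, P₁^{∇'} on the reflector space, coincide if and only if the (0,2)-parts of the torsions of the two connections coincide.) -/
/-- The `(0,2)`-part of an (alternating bilinear) map `B : V × V → V` with respect to an
endomorphism `K` with `K ∘ K = ε • id`:
`B^{0,2}_K(X,Y) = (1/4)(ε B(X,Y) + B(KX,KY) − K B(KX,Y) − K B(X,KY))`. -/
noncomputable def part02 {V : Type*} [AddCommGroup V] [Module ℝ V]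
    (ε : ℝ) (K : Module.End ℝ V) (B : V → V → V) (X Y : V) : V :=
  (4⁻¹ : ℝ) • (ε • B X Y + B (K X) (K Y) - K (B (K X) Y) - K (B X (K Y)))

section Aux

variable {V : Type*} [AddCommGroup V] [Module ℝ V]

/-- First coefficient of the "pure part" of the master identity. -/
noncomputable def gg1 (J1 J2 J3 : Module.End ℝ V) (s1 s2 s3 : V →ₗ[ℝ] ℝ)
    (c1 c2 c3 : ℝ) (X : V) : ℝ :=
  2*((c2^2 - c3^2) * s1 X - c1*c2 * s2 X + c1*c3 * s3 X
     + c1*(-(c3 * s2 (J1 X)) + c2 * s3 (J1 X))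
     + c2*(-(c3 * s2 (J2 X)) + c2 * s3 (J2 X))
     + c3*(-(c3 * s2 (J3 X)) + c2 * s3 (J3 X)))

/-- Second coefficient of the "pure part" of the master identity. -/
noncomputable def gg2 (J1 J2 J3 : Module.End ℝ V) (s1 s2 s3 : V →ₗ[ℝ] ℝ)
    (c1 c2 c3 : ℝ) (X : V) : ℝ :=
  2*(-(c1*c2) * s1 X + (c1^2 - c3^2) * s2 X + c2*c3 * s3 X
     + c1*(c3 * s1 (J1 X) - c1 * s3 (J1 X))
     + c2*(c3 * s1 (J2 X) - c1 * s3 (J2 X))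
     + c3*(c3 * s1 (J3 X) - c1 * s3 (J3 X)))

/-- Third coefficient of the "pure part" of the master identity. -/
noncomputable def gg3 (J1 J2 J3 : Module.End ℝ V) (s1 s2 s3 : V →ₗ[ℝ] ℝ)
    (c1 c2 c3 : ℝ) (X : V) : ℝ :=
  2*(-(c1*c3) * s1 X - c2*c3 * s2 X + (c1^2 + c2^2) * s3 X
     + c1*(c2 * s1 (J1 X) - c1 * s2 (J1 X))
     + c2*(c2 * s1 (J2 X) - c1 * s2 (J2 X))
     + c3*(c2 * s1 (J3 X) - c1 * s2 (J3 X)))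

/-- The "pure part" `F(c; X, Y)` appearing in the master identity. -/
noncomputable def FF (J1 J2 J3 : Module.End ℝ V) (s1 s2 s3 : V →ₗ[ℝ] ℝ)
    (c1 c2 c3 : ℝ) (X Y : V) : V :=
  gg1 J1 J2 J3 s1 s2 s3 c1 c2 c3 X • J1 Y
  + gg2 J1 J2 J3 s1 s2 s3 c1 c2 c3 X • J2 Y
  + gg3 J1 J2 J3 s1 s2 s3 c1 c2 c3 X • J3 Y

end Aux

set_option maxHeartbeats 1000000 in
/-- Corollary 3.4 (algebraic core): for a paraquaternionic triple `(J₁, J₂, J₃)` on a real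
vector space `V` of dimension `4n`, `n ≥ 1`, and `S : V → End ℝ V` linear with decomposition
`S_X = S⁰_X + s¹(X)J₁ + s²(X)J₂ + s³(X)J₃`, `S⁰_X` commuting with each `Jₐ`, setting
`D(X,Y) := S_X Y − S_Y X`, the following are equivalent:
(i) `s¹(J₁X) = s²(J₂X) = s³(J₃X)` for all `X`;
(ii) `D^{0,2}_K = 0` for every `K = c₁J₁ + c₂J₂ + c₃J₃` with `c₁² + c₂² − c₃² = −1`;
(iii) `D^{0,2}_K = 0` for every `K = b₁J₁ + b₂J₂ + b₃J₃` with `b₁² + b₂² − b₃² = 1`. -/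
theorem torsion_02_parts_coincide_iff
    {V : Type*} [AddCommGroup V] [Module ℝ V] [FiniteDimensional ℝ V]
    (n : ℕ) (hn : 1 ≤ n) (hdim : Module.finrank ℝ V = 4 * n)
    (J1 J2 J3 : Module.End ℝ V)
    (h1 : J1 * J1 = 1) (h2 : J2 * J2 = 1) (h3 : J3 * J3 = -1)
    (h12 : J1 * J2 = J3) (h21 : J2 * J1 = -J3)
    (S : V →ₗ[ℝ] Module.End ℝ V)
    (S0 : V → Module.End ℝ V) (s1 s2 s3 : V →ₗ[ℝ] ℝ)
    (hS : ∀ X : V, S X = S0 X + s1 X • J1 + s2 X • J2 + s3 X • J3)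
    (hc1 : ∀ X : V, Commute (S0 X) J1) (hc2 : ∀ X : V, Commute (S0 X) J2)
    (hc3 : ∀ X : V, Commute (S0 X) J3)
    (D : V → V → V) (hD : ∀ X Y : V, D X Y = S X Y - S Y X) :
    List.TFAE
      [ (∀ X : V, s1 (J1 X) = s2 (J2 X) ∧ s2 (J2 X) = s3 (J3 X)),
        (∀ K : Module.End ℝ V,
          (∃ c1 c2 c3 : ℝ, c1 ^ 2 + c2 ^ 2 - c3 ^ 2 = -1 ∧
            K = c1 • J1 + c2 • J2 + c3 • J3) →
          ∀ X Y : V, part02 (-1) K D X Y = 0),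
        (∀ K : Module.End ℝ V,
          (∃ b1 b2 b3 : ℝ, b1 ^ 2 + b2 ^ 2 - b3 ^ 2 = 1 ∧
            K = b1 • J1 + b2 • J2 + b3 • J3) →
          ∀ X Y : V, part02 1 K D X Y = 0) ] := by
  -- derived multiplication rules
  have h13 : J1 * J3 = J2 := by rw [← h12, ← mul_assoc, h1, one_mul]
  have h31 : J3 * J1 = -J2 := by rw [← h12, mul_assoc, h21, mul_neg, h13]
  have h32 : J3 * J2 = J1 := by rw [← h12, mul_assoc, h2, mul_one]
  have h23 : J2 * J3 = -J1 := by rw [← h12, ← mul_assoc, h21, neg_mul, h32]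
  -- pointwise versions
  have appOf : ∀ {A B : Module.End ℝ V}, A * A = B → True := fun _ => trivial
  have a11 : ∀ W : V, J1 (J1 W) = W := fun W => by
    simpa [Module.End.mul_apply] using LinearMap.ext_iff.mp h1 W
  have a22 : ∀ W : V, J2 (J2 W) = W := fun W => by
    simpa [Module.End.mul_apply] using LinearMap.ext_iff.mp h2 W
  have a33 : ∀ W : V, J3 (J3 W) = -W := fun W => by
    simpa [Module.End.mul_apply] using LinearMap.ext_iff.mp h3 W
  have a12 : ∀ W : V, J1 (J2 W) = J3 W := fun W => by
    simpa [Module.End.mul_apply] using LinearMap.ext_iff.mp h12 W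
  have a21 : ∀ W : V, J2 (J1 W) = -(J3 W) := fun W => by
    simpa [Module.End.mul_apply] using LinearMap.ext_iff.mp h21 W
  have a13 : ∀ W : V, J1 (J3 W) = J2 W := fun W => by
    simpa [Module.End.mul_apply] using LinearMap.ext_iff.mp h13 W
  have a31 : ∀ W : V, J3 (J1 W) = -(J2 W) := fun W => by
    simpa [Module.End.mul_apply] using LinearMap.ext_iff.mp h31 W
  have a32 : ∀ W : V, J3 (J2 W) = J1 W := fun W => by
    simpa [Module.End.mul_apply] using LinearMap.ext_iff.mp h32 W
  have a23 : ∀ W : V, J2 (J3 W) = -(J1 W) := fun W => by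
    simpa [Module.End.mul_apply] using LinearMap.ext_iff.mp h23 W
  have b1 : ∀ Z W : V, J1 (S0 Z W) = S0 Z (J1 W) := fun Z W => by
    simpa [Module.End.mul_apply] using (LinearMap.ext_iff.mp (hc1 Z).eq W).symm
  have b2 : ∀ Z W : V, J2 (S0 Z W) = S0 Z (J2 W) := fun Z W => by
    simpa [Module.End.mul_apply] using (LinearMap.ext_iff.mp (hc2 Z).eq W).symm
  have b3 : ∀ Z W : V, J3 (S0 Z W) = S0 Z (J3 W) := fun Z W => by
    simpa [Module.End.mul_apply] using (LinearMap.ext_iff.mp (hc3 Z).eq W).symm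
  -- square of a pure element
  have sqJ : ∀ a b d : ℝ,
      (a • J1 + b • J2 + d • J3) * (a • J1 + b • J2 + d • J3)
        = (a^2 + b^2 - d^2) • (1 : Module.End ℝ V) := by
    intro a b d
    simp only [add_mul, mul_add, smul_mul_assoc, mul_smul_comm,
      h1, h2, h3, h12, h21, h13, h31, h23, h32]
    module
  -- the rank argument
  have rank0 : ∀ (a b d : ℝ) (X : V),
      (∀ Z : V, a • J1 Z + b • J2 Z + d • J3 Z ∈
        Submodule.span ℝ ({J1 X, J2 X, J3 X} : Set V)) → a^2 + b^2 - d^2 = 0 := by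
    intro a b d X hmem
    by_contra hr
    set A : Module.End ℝ V := a • J1 + b • J2 + d • J3 with hA
    have hApp : ∀ Z : V, A Z = a • J1 Z + b • J2 Z + d • J3 Z := fun Z => by
      simp [hA, LinearMap.add_apply, LinearMap.smul_apply]
    have hAA : ∀ Z : V, A (A Z) = (a^2 + b^2 - d^2) • Z := fun Z => by
      rw [← Module.End.mul_apply, hA, sqJ]
      simp
    have hz : ∀ Z : V, Z ∈
        Submodule.span ℝ ({A (J1 X), A (J2 X), A (J3 X)} : Set V) := by
      intro Z
      have himg : A Z ∈ Submodule.span ℝ ({J1 X, J2 X, J3 X} : Set V) := by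
        rw [hApp]; exact hmem Z
      have h1' : A (A Z) ∈ Submodule.map A
          (Submodule.span ℝ ({J1 X, J2 X, J3 X} : Set V)) :=
        Submodule.mem_map_of_mem himg
      rw [Submodule.map_span] at h1'
      have himg_eq : A '' {J1 X, J2 X, J3 X} = {A (J1 X), A (J2 X), A (J3 X)} := by
        simp [Set.image_insert_eq]
      rw [himg_eq] at h1'
      have hZeq : Z = (a^2 + b^2 - d^2)⁻¹ • (A (A Z)) := by
        rw [hAA, smul_smul, inv_mul_cancel₀ hr, one_smul]
      rw [hZeq]
      exact Submodule.smul_mem _ _ h1'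
    have htop : Submodule.span ℝ ({A (J1 X), A (J2 X), A (J3 X)} : Set V) = ⊤ := by
      rw [eq_top_iff]; intro Z _; exact hz Z
    classical
    have hcard := finrank_span_le_card (R := ℝ) ({A (J1 X), A (J2 X), A (J3 X)} : Set V)
    rw [htop, finrank_top] at hcard
    have hcard3 : ({A (J1 X), A (J2 X), A (J3 X)} : Set V).toFinset.card ≤ 3 := by
      classical
      rw [Set.toFinset_insert, Set.toFinset_insert, Set.toFinset_singleton]
      refine (Finset.card_insert_le _ _).trans ?_
      have := Finset.card_insert_le (A (J2 X)) ({A (J3 X)} : Finset V)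
      simp at this ⊢
      omega
    have : Module.finrank ℝ V ≤ 3 := le_trans hcard hcard3
    rw [hdim] at this
    omega
  -- the master identity
  have master : ∀ (c1 c2 c3 : ℝ) (X Y : V),
      (c1^2 + c2^2 - c3^2) • D X Y
        + D ((c1 • J1 + c2 • J2 + c3 • J3) X) ((c1 • J1 + c2 • J2 + c3 • J3) Y)
        - (c1 • J1 + c2 • J2 + c3 • J3) (D ((c1 • J1 + c2 • J2 + c3 • J3) X) Y)
        - (c1 • J1 + c2 • J2 + c3 • J3) (D X ((c1 • J1 + c2 • J2 + c3 • J3) Y))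
      = FF J1 J2 J3 s1 s2 s3 c1 c2 c3 X Y - FF J1 J2 J3 s1 s2 s3 c1 c2 c3 Y X := by
    intro c1 c2 c3 X Y
    simp only [FF, gg1, gg2, gg3, hD, hS, LinearMap.add_apply, LinearMap.smul_apply,
      map_add, map_sub, map_smul, map_neg, smul_neg, neg_smul, neg_neg, smul_eq_mul,
      a11, a12, a13, a21, a22, a23, a31, a32, a33, b1, b2, b3]
    module
  -- extraction of the pure-part equation from the vanishing of a (0,2)-part
  have extract : ∀ (ε : ℝ) (c1 c2 c3 : ℝ), c1^2 + c2^2 - c3^2 = ε →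
      (∀ X Y : V, part02 ε (c1 • J1 + c2 • J2 + c3 • J3) D X Y = 0) →
      ∀ X Y : V, FF J1 J2 J3 s1 s2 s3 c1 c2 c3 X Y
        - FF J1 J2 J3 s1 s2 s3 c1 c2 c3 Y X = 0 := by
    intro ε c1 c2 c3 hq hyp X Y
    have hm := master c1 c2 c3 X Y
    rw [hq] at hm
    have h0 := hyp X Y
    unfold part02 at h0
    rw [smul_eq_zero] at h0
    rcases h0 with h0 | h0
    · norm_num at h0
    · exact hm.symm.trans h0
  -- vanishing of the pure part under condition (i)
  have hFF0 : (∀ X : V, s1 (J1 X) = s2 (J2 X) ∧ s2 (J2 X) = s3 (J3 X)) →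
      ∀ (c1 c2 c3 : ℝ) (X Y : V), FF J1 J2 J3 s1 s2 s3 c1 c2 c3 X Y = 0 := by
    intro hi
    have hr22 : ∀ X : V, s2 (J2 X) = s1 (J1 X) := fun X => ((hi X).1).symm
    have hr33 : ∀ X : V, s3 (J3 X) = s1 (J1 X) := fun X => ((hi X).1.trans (hi X).2).symm
    have hr23 : ∀ X : V, s2 (J3 X) = -(s1 X) := by
      intro X
      have h := (hi (J1 X)).1
      rw [a11, a21, map_neg] at h
      linarith
    have hr32 : ∀ X : V, s3 (J2 X) = -(s1 X) := by
      intro X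
      have h := (hi (J1 X)).2
      rw [a21, a31, map_neg, map_neg] at h
      have := hr23 X
      linarith
    have hr13 : ∀ X : V, s1 (J3 X) = s2 X := by
      intro X
      have h := (hi (J2 X)).1
      rw [a12, a22] at h
      exact h
    have hr31 : ∀ X : V, s3 (J1 X) = s2 X := by
      intro X
      have h := (hi (J2 X)).2
      rw [a22, a32] at h
      exact h.symm
    have hr21 : ∀ X : V, s2 (J1 X) = s3 X := by
      intro X
      have h := (hi (J3 X)).2
      rw [a23, a33, map_neg, map_neg] at h
      linarith
    have hr12 : ∀ X : V, s1 (J2 X) = -(s3 X) := by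
      intro X
      have h := (hi (J3 X)).1
      rw [a13, a23, map_neg] at h
      rw [h, hr21 X]
    intro c1 c2 c3 X Y
    have e1 : gg1 J1 J2 J3 s1 s2 s3 c1 c2 c3 X = 0 := by
      simp only [gg1, hr21, hr31, hr12, hr32, hr13, hr23, hr22, hr33]; ring
    have e2 : gg2 J1 J2 J3 s1 s2 s3 c1 c2 c3 X = 0 := by
      simp only [gg2, hr21, hr31, hr12, hr32, hr13, hr23, hr22, hr33]; ring
    have e3 : gg3 J1 J2 J3 s1 s2 s3 c1 c2 c3 X = 0 := by
      simp only [gg3, hr21, hr31, hr12, hr32, hr13, hr23, hr22, hr33]; ring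
    simp [FF, e1, e2, e3]
  -- applying `FF` in its second variable and span membership
  have hFapp : ∀ (c1 c2 c3 : ℝ) (X Y : V),
      FF J1 J2 J3 s1 s2 s3 c1 c2 c3 X Y
        = gg1 J1 J2 J3 s1 s2 s3 c1 c2 c3 X • J1 Y
          + gg2 J1 J2 J3 s1 s2 s3 c1 c2 c3 X • J2 Y
          + gg3 J1 J2 J3 s1 s2 s3 c1 c2 c3 X • J3 Y := fun _ _ _ _ _ => rfl
  have memspan : ∀ (c1 c2 c3 : ℝ) (W Z : V),
      FF J1 J2 J3 s1 s2 s3 c1 c2 c3 Z W ∈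
        Submodule.span ℝ ({J1 W, J2 W, J3 W} : Set V) := by
    intro c1 c2 c3 W Z
    rw [hFapp]
    refine Submodule.add_mem _ (Submodule.add_mem _ ?_ ?_) ?_ <;>
      exact Submodule.smul_mem _ _ (Submodule.subset_span (by simp))
  -- the core extraction of condition (i) from two pure-part equations
  have core : (∀ X Y : V,
        FF J1 J2 J3 s1 s2 s3 0 0 1 X Y - FF J1 J2 J3 s1 s2 s3 0 0 1 Y X = 0) →
      (∀ X Y : V,
        FF J1 J2 J3 s1 s2 s3 (3/4) 0 (5/4) X Y
          - FF J1 J2 J3 s1 s2 s3 (3/4) 0 (5/4) Y X = 0) →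
      ∀ X : V, s1 (J1 X) = s2 (J2 X) ∧ s2 (J2 X) = s3 (J3 X) := by
    intro hP0 hP1
    have key1 : ∀ W : V, s2 (J3 W) = -(s1 W) ∧ s1 (J3 W) = s2 W := by
      intro W
      have h0 := rank0 (gg1 J1 J2 J3 s1 s2 s3 0 0 1 W) (gg2 J1 J2 J3 s1 s2 s3 0 0 1 W)
        (gg3 J1 J2 J3 s1 s2 s3 0 0 1 W) W ?_
      · have e1 : gg1 J1 J2 J3 s1 s2 s3 0 0 1 W = 2*(-(s1 W) - s2 (J3 W)) := by
          simp only [gg1]; ring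
        have e2 : gg2 J1 J2 J3 s1 s2 s3 0 0 1 W = 2*(-(s2 W) + s1 (J3 W)) := by
          simp only [gg2]; ring
        have e3 : gg3 J1 J2 J3 s1 s2 s3 0 0 1 W = 0 := by simp only [gg3]; ring
        rw [e1, e2, e3] at h0
        constructor
        · have hsq : (s1 W + s2 (J3 W))^2 = 0 := by
            nlinarith [sq_nonneg (s1 W + s2 (J3 W)), sq_nonneg (s2 W - s1 (J3 W))]
          have := sq_eq_zero_iff.mp hsq
          linarith
        · have hsq : (s2 W - s1 (J3 W))^2 = 0 := by
            nlinarith [sq_nonneg (s1 W + s2 (J3 W)), sq_nonneg (s2 W - s1 (J3 W))]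
          have := sq_eq_zero_iff.mp hsq
          linarith
      · intro Z
        rw [← hFapp, sub_eq_zero.mp (hP0 W Z)]
        exact memspan _ _ _ _ _
    have key2 : ∀ W : V, s2 (J1 W) = s3 W := by
      intro W
      have h0 := rank0 (gg1 J1 J2 J3 s1 s2 s3 (3/4) 0 (5/4) W)
        (gg2 J1 J2 J3 s1 s2 s3 (3/4) 0 (5/4) W)
        (gg3 J1 J2 J3 s1 s2 s3 (3/4) 0 (5/4) W) W ?_
      · have e1 : gg1 J1 J2 J3 s1 s2 s3 (3/4) 0 (5/4) W
            = (15/8)*(s3 W - s2 (J1 W)) := by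
          simp only [gg1, (key1 W).1]; ring
        have e3 : gg3 J1 J2 J3 s1 s2 s3 (3/4) 0 (5/4) W
            = (9/8)*(s3 W - s2 (J1 W)) := by
          simp only [gg3, (key1 W).1]; ring
        rw [e1, e3] at h0
        generalize hGq : gg2 J1 J2 J3 s1 s2 s3 (3/4) 0 (5/4) W = q at h0
        have hsq : (s3 W - s2 (J1 W))^2 = 0 := by
          nlinarith [sq_nonneg q, sq_nonneg (s3 W - s2 (J1 W))]
        have := sq_eq_zero_iff.mp hsq
        linarith
      · intro Z
        rw [← hFapp, sub_eq_zero.mp (hP1 W Z)]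
        exact memspan _ _ _ _ _
    intro X
    constructor
    · have h := (key1 (J2 X)).2
      rw [a32] at h
      exact h
    · have h := key2 (J3 X)
      rw [a13] at h
      exact h
  -- two linear-combination identities between pure parts at rational quadric points
  have comb0 : ∀ X Y : V,
      FF J1 J2 J3 s1 s2 s3 0 0 1 X Y - FF J1 J2 J3 s1 s2 s3 0 0 1 Y X
        = (8/9 : ℝ) • ((FF J1 J2 J3 s1 s2 s3 (5/4) 0 (3/4) X Y
              - FF J1 J2 J3 s1 s2 s3 (5/4) 0 (3/4) Y X)
            + (FF J1 J2 J3 s1 s2 s3 (5/4) 0 (-(3/4)) X Y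
              - FF J1 J2 J3 s1 s2 s3 (5/4) 0 (-(3/4)) Y X))
          - (25/9 : ℝ) • (FF J1 J2 J3 s1 s2 s3 1 0 0 X Y
              - FF J1 J2 J3 s1 s2 s3 1 0 0 Y X) := by
    intro X Y
    simp only [FF, gg1, gg2, gg3]
    module
  have comb1 : ∀ X Y : V,
      FF J1 J2 J3 s1 s2 s3 (3/4) 0 (5/4) X Y - FF J1 J2 J3 s1 s2 s3 (3/4) 0 (5/4) Y X
        = (-(34/9) : ℝ) • (FF J1 J2 J3 s1 s2 s3 1 0 0 X Y
              - FF J1 J2 J3 s1 s2 s3 1 0 0 Y X)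
          + (17/9 : ℝ) • (FF J1 J2 J3 s1 s2 s3 (5/4) 0 (3/4) X Y
              - FF J1 J2 J3 s1 s2 s3 (5/4) 0 (3/4) Y X)
          + (8/9 : ℝ) • (FF J1 J2 J3 s1 s2 s3 (5/4) 0 (-(3/4)) X Y
              - FF J1 J2 J3 s1 s2 s3 (5/4) 0 (-(3/4)) Y X) := by
    intro X Y
    simp only [FF, gg1, gg2, gg3]
    module
  tfae_have 1 → 2 := by
    intro hi K hK X Y
    obtain ⟨c1, c2, c3, hq, rfl⟩ := hK
    have hm := master c1 c2 c3 X Y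
    rw [hq, hFF0 hi c1 c2 c3 X Y, hFF0 hi c1 c2 c3 Y X, sub_zero] at hm
    unfold part02
    rw [hm, smul_zero]
  tfae_have 1 → 3 := by
    intro hi K hK X Y
    obtain ⟨c1, c2, c3, hq, rfl⟩ := hK
    have hm := master c1 c2 c3 X Y
    rw [hq, hFF0 hi c1 c2 c3 X Y, hFF0 hi c1 c2 c3 Y X, sub_zero] at hm
    unfold part02
    rw [hm, smul_zero]
  tfae_have 2 → 1 := by
    intro hyp
    refine core ?_ ?_
    · exact extract (-1) 0 0 1 (by norm_num) (hyp _ ⟨0, 0, 1, by norm_num, rfl⟩)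
    · exact extract (-1) (3/4) 0 (5/4) (by norm_num) (hyp _ ⟨3/4, 0, 5/4, by norm_num, rfl⟩)
  tfae_have 3 → 1 := by
    intro hyp
    have hQ0 := extract 1 1 0 0 (by norm_num) (hyp _ ⟨1, 0, 0, by norm_num, rfl⟩)
    have hQ1 := extract 1 (5/4) 0 (3/4) (by norm_num) (hyp _ ⟨5/4, 0, 3/4, by norm_num, rfl⟩)
    have hQ2 := extract 1 (5/4) 0 (-(3/4)) (by norm_num)
      (hyp _ ⟨5/4, 0, -(3/4), by norm_num, rfl⟩)
    refine core ?_ ?_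
    · intro X Y
      rw [comb0 X Y, hQ1 X Y, hQ2 X Y, hQ0 X Y]
      simp
    · intro X Y
      rw [comb1 X Y, hQ1 X Y, hQ2 X Y, hQ0 X Y]
      simp
  tfae_finish
end

section
/- Let V be a real vector space with a paraquaternionic triple (J₁, J₂, J₃) and let B : V × V → V be an alternating ℝ-bilinear map. Then B^{0,2}_K = 0 for every K = c₁J₁ + c₂J₂ + c₃J₃ with c₁² + c₂² − c₃² = −1 if and only if B^{0,2}_K = 0 for every K = b₁J₁ + b₂J₂ + b₃J₃ with b₁² + b₂² − b₃² = 1. (This is Lemma 3.1 of the paper, applied pointwise: vanishing of the (0,2)-part of a TM-valued 2-form with respect to all complex structures of the twistor space is equivalent to its vanishing with respect to all paracomplex structures of the reflector space.) -/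
section Aux
variable {V : Type*} [AddCommGroup V] [Module ℝ V]

/-- Expansion of the quadratic expression. -/
lemma part02_expand (J1 J2 J3 : Module.End ℝ V) (B : V →ₗ[ℝ] V →ₗ[ℝ] V)
    (c1 c2 c3 : ℝ) (X Y : V) :
    (c1 ^ 2 + c2 ^ 2 - c3 ^ 2) • B X Y
      + B ((c1 • J1 + c2 • J2 + c3 • J3) X) ((c1 • J1 + c2 • J2 + c3 • J3) Y)
      - (c1 • J1 + c2 • J2 + c3 • J3) (B ((c1 • J1 + c2 • J2 + c3 • J3) X) Y)
      - (c1 • J1 + c2 • J2 + c3 • J3) (B X ((c1 • J1 + c2 • J2 + c3 • J3) Y))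
    = c1 ^ 2 • (B X Y + B (J1 X) (J1 Y) - J1 (B (J1 X) Y) - J1 (B X (J1 Y)))
      + c2 ^ 2 • (B X Y + B (J2 X) (J2 Y) - J2 (B (J2 X) Y) - J2 (B X (J2 Y)))
      + c3 ^ 2 • (-(B X Y) + B (J3 X) (J3 Y) - J3 (B (J3 X) Y) - J3 (B X (J3 Y)))
      + (c1 * c2) • (B (J1 X) (J2 Y) + B (J2 X) (J1 Y)
          - J1 (B (J2 X) Y) - J2 (B (J1 X) Y) - J1 (B X (J2 Y)) - J2 (B X (J1 Y)))
      + (c1 * c3) • (B (J1 X) (J3 Y) + B (J3 X) (J1 Y)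
          - J1 (B (J3 X) Y) - J3 (B (J1 X) Y) - J1 (B X (J3 Y)) - J3 (B X (J1 Y)))
      + (c2 * c3) • (B (J2 X) (J3 Y) + B (J3 X) (J2 Y)
          - J2 (B (J3 X) Y) - J3 (B (J2 X) Y) - J2 (B X (J3 Y)) - J3 (B X (J2 Y))) := by
  simp only [LinearMap.add_apply, LinearMap.smul_apply, map_add, map_smul]
  module

/-- From vanishing on the hyperboloid `c1²+c2²-c3² = -1`, all six coefficients vanish. -/
lemma aux_neg (a11 a22 a33 a12 a13 a23 : V)
    (h : ∀ c1 c2 c3 : ℝ, c1 ^ 2 + c2 ^ 2 - c3 ^ 2 = -1 →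
      c1 ^ 2 • a11 + c2 ^ 2 • a22 + c3 ^ 2 • a33 + (c1 * c2) • a12
        + (c1 * c3) • a13 + (c2 * c3) • a23 = 0) :
    a11 = 0 ∧ a22 = 0 ∧ a33 = 0 ∧ a12 = 0 ∧ a13 = 0 ∧ a23 = 0 := by
  have e1 := h 0 0 1 (by norm_num)
  simp only [ne_eq, OfNat.ofNat_ne_zero, not_false_eq_true, zero_pow, zero_smul, one_pow,
    one_smul, zero_mul, mul_zero, mul_one, zero_add, add_zero] at e1
  -- e1 : a33 = 0
  have e2 := h (3/4) 0 (5/4) (by norm_num)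
  have e3 := h (-(3/4)) 0 (5/4) (by norm_num)
  have ha11 : a11 = 0 := by
    have : ((9/8 : ℝ)) • a11 = 0 := by
      linear_combination (norm := module) e2 + e3 - (25/8 : ℝ) • e1
    exact (smul_eq_zero.mp this).resolve_left (by norm_num)
  have ha13 : a13 = 0 := by
    have : ((15/8 : ℝ)) • a13 = 0 := by
      linear_combination (norm := module) e2 - e3
    exact (smul_eq_zero.mp this).resolve_left (by norm_num)
  have e4 := h 0 (3/4) (5/4) (by norm_num)
  have e5 := h 0 (-(3/4)) (5/4) (by norm_num)
  have ha22 : a22 = 0 := by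
    have : ((9/8 : ℝ)) • a22 = 0 := by
      linear_combination (norm := module) e4 + e5 - (25/8 : ℝ) • e1
    exact (smul_eq_zero.mp this).resolve_left (by norm_num)
  have ha23 : a23 = 0 := by
    have : ((15/8 : ℝ)) • a23 = 0 := by
      linear_combination (norm := module) e4 - e5
    exact (smul_eq_zero.mp this).resolve_left (by norm_num)
  have e6 := h 2 2 3 (by norm_num)
  have ha12 : a12 = 0 := by
    have : ((4 : ℝ)) • a12 = 0 := by
      linear_combination (norm := module) e6 - (4:ℝ) • ha11 - (4:ℝ) • ha22 - (9:ℝ) • e1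
        - (6:ℝ) • ha13 - (6:ℝ) • ha23
    exact (smul_eq_zero.mp this).resolve_left (by norm_num)
  exact ⟨ha11, ha22, e1, ha12, ha13, ha23⟩

lemma aux_pos (a11 a22 a33 a12 a13 a23 : V)
    (h : ∀ c1 c2 c3 : ℝ, c1 ^ 2 + c2 ^ 2 - c3 ^ 2 = 1 →
      c1 ^ 2 • a11 + c2 ^ 2 • a22 + c3 ^ 2 • a33 + (c1 * c2) • a12
        + (c1 * c3) • a13 + (c2 * c3) • a23 = 0) :
    a11 = 0 ∧ a22 = 0 ∧ a33 = 0 ∧ a12 = 0 ∧ a13 = 0 ∧ a23 = 0 := by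
  have e1 := h 1 0 0 (by norm_num)
  simp only [ne_eq, OfNat.ofNat_ne_zero, not_false_eq_true, zero_pow, zero_smul, one_pow,
    one_smul, zero_mul, mul_zero, mul_one, zero_add, add_zero] at e1
  have e1' := h 0 1 0 (by norm_num)
  simp only [ne_eq, OfNat.ofNat_ne_zero, not_false_eq_true, zero_pow, zero_smul, one_pow,
    one_smul, zero_mul, mul_zero, mul_one, zero_add, add_zero] at e1'
  have e2 := h (5/4) 0 (3/4) (by norm_num)
  have e3 := h (-(5/4)) 0 (3/4) (by norm_num)
  have ha33 : a33 = 0 := by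
    have : ((9/8 : ℝ)) • a33 = 0 := by
      linear_combination (norm := module) e2 + e3 - (25/8 : ℝ) • e1
    exact (smul_eq_zero.mp this).resolve_left (by norm_num)
  have ha13 : a13 = 0 := by
    have : ((15/8 : ℝ)) • a13 = 0 := by
      linear_combination (norm := module) e2 - e3
    exact (smul_eq_zero.mp this).resolve_left (by norm_num)
  have e4 := h 0 (5/4) (3/4) (by norm_num)
  have e5 := h 0 (-(5/4)) (3/4) (by norm_num)
  have ha23 : a23 = 0 := by
    have : ((15/8 : ℝ)) • a23 = 0 := by
      linear_combination (norm := module) e4 - e5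
    exact (smul_eq_zero.mp this).resolve_left (by norm_num)
  have e6 := h 1 1 1 (by norm_num)
  have ha12 : a12 = 0 := by
    linear_combination (norm := module) e6 - e1 - e1' - ha33 - ha13 - ha23
  exact ⟨e1, e1', ha33, ha12, ha13, ha23⟩

end Aux

/-- Lemma 3.1 (pointwise): for a paraquaternionic triple `(J₁, J₂, J₃)` on a real vector
space `V` and an alternating bilinear `B : V × V → V`, the `(0,2)`-part of `B` vanishes for
every compatible complex structure (`c₁² + c₂² − c₃² = −1`) if and only if it vanishes for
every compatible paracomplex structure (`b₁² + b₂² − b₃² = 1`). -/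

theorem part02_vanish_twistor_iff_reflector
    {V : Type*} [AddCommGroup V] [Module ℝ V]
    (J1 J2 J3 : Module.End ℝ V)
    (h1 : J1 * J1 = 1) (h2 : J2 * J2 = 1) (h3 : J3 * J3 = -1)
    (h12 : J1 * J2 = J3) (h21 : J2 * J1 = -J3)
    (B : V →ₗ[ℝ] V →ₗ[ℝ] V) (halt : ∀ X : V, B X X = 0) :
    (∀ K : Module.End ℝ V,
      (∃ c1 c2 c3 : ℝ, c1 ^ 2 + c2 ^ 2 - c3 ^ 2 = -1 ∧
        K = c1 • J1 + c2 • J2 + c3 • J3) →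
      ∀ X Y : V, part02 (-1) K (fun X Y => B X Y) X Y = 0) ↔
    (∀ K : Module.End ℝ V,
      (∃ b1 b2 b3 : ℝ, b1 ^ 2 + b2 ^ 2 - b3 ^ 2 = 1 ∧
        K = b1 • J1 + b2 • J2 + b3 • J3) →
      ∀ X Y : V, part02 1 K (fun X Y => B X Y) X Y = 0) := by
  constructor
  · intro H K hK X Y
    obtain ⟨b1, b2, b3, hb, rfl⟩ := hK
    obtain ⟨ha11, ha22, ha33, ha12, ha13, ha23⟩ := aux_neg _ _ _ _ _ _
      (fun c1 c2 c3 hc => by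
        have hz := H (c1 • J1 + c2 • J2 + c3 • J3) ⟨c1, c2, c3, hc, rfl⟩ X Y
        rw [part02] at hz
        have e := part02_expand J1 J2 J3 B c1 c2 c3 X Y
        rw [hc] at e
        rw [e] at hz
        exact (smul_eq_zero.mp hz).resolve_left (by norm_num))
    rw [part02]
    have e := part02_expand J1 J2 J3 B b1 b2 b3 X Y
    rw [hb] at e
    rw [e, ha11, ha22, ha33, ha12, ha13, ha23]
    simp
  · intro H K hK X Y
    obtain ⟨c1, c2, c3, hc, rfl⟩ := hK
    obtain ⟨ha11, ha22, ha33, ha12, ha13, ha23⟩ := aux_pos _ _ _ _ _ _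
      (fun b1 b2 b3 hb => by
        have hz := H (b1 • J1 + b2 • J2 + b3 • J3) ⟨b1, b2, b3, hb, rfl⟩ X Y
        rw [part02] at hz
        have e := part02_expand J1 J2 J3 B b1 b2 b3 X Y
        rw [hb] at e
        rw [e] at hz
        exact (smul_eq_zero.mp hz).resolve_left (by norm_num))
    rw [part02]
    have e := part02_expand J1 J2 J3 B c1 c2 c3 X Y
    rw [hc] at e
    rw [e, ha11, ha22, ha33, ha12, ha13, ha23]
    simp
end

section
/- Let V be a real vector space of dimension 4n (n ≥ 1) with a paraquaternionic triple (J₁, J₂, J₃), and let F be an ℝ-linear endomorphism of V such that the commutator [F, Jₐ] lies in the linear span of {J₁, J₂, J₃} for a = 1, 2, 3. Then F decomposes uniquely as F = F' + (1/2n)(ρ₁·J₁ + ρ₂·J₂ + ρ₃·J₃), where F' commutes with J₁, J₂ and J₃ and ρ₁, ρ₂, ρ₃ are real numbers; moreover ρ₁ = (1/2)·tr(J₁∘F), ρ₂ = (1/2)·tr(J₂∘F) and ρ₃ = −(1/2)·tr(J₃∘F). (This is the pointwise content of Proposition 2.1: the curvature of a para-quaternionic connection splits into a gl(n,H̃)-valued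 part and an sp(1,ℝ)-valued part determined by the three Ricci 2-forms.) -/
private lemma trace_aux_zero {V : Type*} [AddCommGroup V] [Module ℝ V] [FiniteDimensional ℝ V]
    (X K G : Module.End ℝ V) (hanti : K * X = -(X * K)) (hcomm : G * K = K * G)
    (hKK : K * K = 1 ∨ K * K = -1) : LinearMap.trace ℝ V (X * G) = 0 := by
  have hXK : X * K = -(K * X) := by rw [hanti, neg_neg]
  have hGKK : G * (K * K) = (K * K) * G := by
    calc G * (K * K) = (G * K) * K := by rw [mul_assoc]
      _ = (K * G) * K := by rw [hcomm]
      _ = K * (G * K) := by rw [mul_assoc]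
      _ = K * (K * G) := by rw [hcomm]
      _ = (K * K) * G := by rw [mul_assoc]
  have hS : LinearMap.trace ℝ V (X * ((K * K) * G))
      = -(LinearMap.trace ℝ V (X * ((K * K) * G))) := by
    calc LinearMap.trace ℝ V (X * ((K * K) * G))
        = LinearMap.trace ℝ V ((X * K) * (K * G)) := by
          rw [show X * ((K*K)*G) = (X*K)*(K*G) by noncomm_ring]
      _ = LinearMap.trace ℝ V ((-(K * X)) * (G * K)) := by rw [hXK, hcomm]
      _ = -(LinearMap.trace ℝ V (K * (X * (G * K)))) := by
          rw [neg_mul, map_neg, show (K*X)*(G*K) = K*(X*(G*K)) by noncomm_ring]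
      _ = -(LinearMap.trace ℝ V ((X * (G * K)) * K)) := by rw [LinearMap.trace_mul_comm]
      _ = -(LinearMap.trace ℝ V (X * ((K * K) * G))) := by
          rw [show (X*(G*K))*K = X*(G*(K*K)) by noncomm_ring, hGKK]
  have h0 : LinearMap.trace ℝ V (X * ((K * K) * G)) = 0 := by linarith
  rcases hKK with h | h
  · rw [h, one_mul] at h0; exact h0
  · rw [h] at h0
    simp only [neg_one_mul, mul_neg, map_neg, neg_eq_zero] at h0
    exact h0

set_option maxHeartbeats 1000000 in
/-- Proposition 2.1 (pointwise): for a paraquaternionic triple `(J₁, J₂, J₃)` on a real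
vector space `V` of dimension `4n` and an endomorphism `F` whose commutator with each `Jₐ`
lies in `span {J₁, J₂, J₃}`, `F` decomposes uniquely as
`F = F' + (1/2n)(ρ₁ J₁ + ρ₂ J₂ + ρ₃ J₃)` with `F'` commuting with each `Jₐ`; moreover
`ρ₁ = (1/2) tr(J₁ ∘ F)`, `ρ₂ = (1/2) tr(J₂ ∘ F)`, `ρ₃ = −(1/2) tr(J₃ ∘ F)`. -/
theorem curvature_splitting
    {V : Type*} [AddCommGroup V] [Module ℝ V] [FiniteDimensional ℝ V]
    (n : ℕ) (hn : 1 ≤ n) (hdim : Module.finrank ℝ V = 4 * n)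
    (J1 J2 J3 : Module.End ℝ V)
    (h1 : J1 * J1 = 1) (h2 : J2 * J2 = 1) (h3 : J3 * J3 = -1)
    (h12 : J1 * J2 = J3) (h21 : J2 * J1 = -J3)
    (F : Module.End ℝ V)
    (hF1 : F * J1 - J1 * F ∈ Submodule.span ℝ {J1, J2, J3})
    (hF2 : F * J2 - J2 * F ∈ Submodule.span ℝ {J1, J2, J3})
    (hF3 : F * J3 - J3 * F ∈ Submodule.span ℝ {J1, J2, J3}) :
    (∃! q : Module.End ℝ V × ℝ × ℝ × ℝ,
      F = q.1 + ((2 * n : ℝ))⁻¹ • (q.2.1 • J1 + q.2.2.1 • J2 + q.2.2.2 • J3) ∧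
      Commute q.1 J1 ∧ Commute q.1 J2 ∧ Commute q.1 J3) ∧
    (∀ (F' : Module.End ℝ V) (ρ1 ρ2 ρ3 : ℝ),
      F = F' + ((2 * n : ℝ))⁻¹ • (ρ1 • J1 + ρ2 • J2 + ρ3 • J3) →
      Commute F' J1 → Commute F' J2 → Commute F' J3 →
      ρ1 = (1 / 2 : ℝ) * LinearMap.trace ℝ V (J1 * F) ∧
      ρ2 = (1 / 2 : ℝ) * LinearMap.trace ℝ V (J2 * F) ∧
      ρ3 = -(1 / 2 : ℝ) * LinearMap.trace ℝ V (J3 * F)) := by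
  have hn0 : (0:ℝ) < (n:ℝ) := by exact_mod_cast Nat.lt_of_lt_of_le Nat.zero_lt_one hn
  have hn' : (n:ℝ) ≠ 0 := ne_of_gt hn0
  -- multiplication table
  have h32 : J3 * J2 = J1 := by rw [← h12, mul_assoc, h2, mul_one]
  have h13 : J1 * J3 = J2 := by rw [← h12, ← mul_assoc, h1, one_mul]
  have h23 : J2 * J3 = -J1 := by rw [← h12, ← mul_assoc, h21, neg_mul, h32]
  have h31 : J3 * J1 = -J2 := by rw [← h12, mul_assoc, h21, mul_neg, h13]
  -- traces
  have trOne : LinearMap.trace ℝ V (1 : Module.End ℝ V) = 4*(n:ℝ) := by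
    rw [LinearMap.trace_one, hdim]; push_cast; ring
  have tJ1 : LinearMap.trace ℝ V J1 = 0 := by
    simpa using trace_aux_zero J1 J3 1 (by rw [h31, h13]) (by simp) (Or.inr h3)
  have tJ2 : LinearMap.trace ℝ V J2 = 0 := by
    simpa using trace_aux_zero J2 J3 1 (by rw [h32, h23, neg_neg]) (by simp) (Or.inr h3)
  have tJ3 : LinearMap.trace ℝ V J3 = 0 := by
    simpa using trace_aux_zero J3 J1 1 (by rw [h13, h31, neg_neg]) (by simp) (Or.inl h1)
  have t11 : LinearMap.trace ℝ V (J1*J1) = 4*(n:ℝ) := by rw [h1, trOne]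
  have t22 : LinearMap.trace ℝ V (J2*J2) = 4*(n:ℝ) := by rw [h2, trOne]
  have t33 : LinearMap.trace ℝ V (J3*J3) = -(4*(n:ℝ)) := by rw [h3, map_neg, trOne]
  have t12 : LinearMap.trace ℝ V (J1*J2) = 0 := by rw [h12, tJ3]
  have t21 : LinearMap.trace ℝ V (J2*J1) = 0 := by rw [h21, map_neg, tJ3, neg_zero]
  have t13 : LinearMap.trace ℝ V (J1*J3) = 0 := by rw [h13, tJ2]
  have t31 : LinearMap.trace ℝ V (J3*J1) = 0 := by rw [h31, map_neg, tJ2, neg_zero]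
  have t23 : LinearMap.trace ℝ V (J2*J3) = 0 := by rw [h23, map_neg, tJ1, neg_zero]
  have t32 : LinearMap.trace ℝ V (J3*J2) = 0 := by rw [h32, tJ1]
  -- the uniqueness-of-ρ statement (second conjunct), proven first
  have key : ∀ (F' : Module.End ℝ V) (ρ1 ρ2 ρ3 : ℝ),
      F = F' + ((2 * n : ℝ))⁻¹ • (ρ1 • J1 + ρ2 • J2 + ρ3 • J3) →
      Commute F' J1 → Commute F' J2 → Commute F' J3 →
      ρ1 = (1 / 2 : ℝ) * LinearMap.trace ℝ V (J1 * F) ∧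
      ρ2 = (1 / 2 : ℝ) * LinearMap.trace ℝ V (J2 * F) ∧
      ρ3 = -(1 / 2 : ℝ) * LinearMap.trace ℝ V (J3 * F) := by
    intro F' ρ1 ρ2 ρ3 hFeq hc1 hc2 hc3
    have hcc1 : F' * J1 = J1 * F' := hc1.eq
    have hcc3 : F' * J3 = J3 * F' := hc3.eq
    have tF'1 : LinearMap.trace ℝ V (J1*F') = 0 :=
      trace_aux_zero J1 J3 F' (by rw [h31, h13]) hcc3 (Or.inr h3)
    have tF'2 : LinearMap.trace ℝ V (J2*F') = 0 :=
      trace_aux_zero J2 J3 F' (by rw [h32, h23, neg_neg]) hcc3 (Or.inr h3)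
    have tF'3 : LinearMap.trace ℝ V (J3*F') = 0 :=
      trace_aux_zero J3 J1 F' (by rw [h13, h31, neg_neg]) hcc1 (Or.inl h1)
    have e1 : LinearMap.trace ℝ V (J1*F) = 2*ρ1 := by
      rw [hFeq]
      simp only [mul_add, mul_smul_comm, map_add, map_smul, smul_eq_mul]
      rw [tF'1, t11, t12, t13]
      field_simp
      ring
    have e2 : LinearMap.trace ℝ V (J2*F) = 2*ρ2 := by
      rw [hFeq]
      simp only [mul_add, mul_smul_comm, map_add, map_smul, smul_eq_mul]
      rw [tF'2, t21, t22, t23]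
      field_simp
      ring
    have e3 : LinearMap.trace ℝ V (J3*F) = -(2*ρ3) := by
      rw [hFeq]
      simp only [mul_add, mul_smul_comm, map_add, map_smul, smul_eq_mul]
      rw [tF'3, t31, t32, t33]
      field_simp
      ring
    refine ⟨by linarith, by linarith, by linarith⟩
  -- extract span coefficients
  have span3 : ∀ X : Module.End ℝ V, X ∈ Submodule.span ℝ {J1, J2, J3} →
      ∃ a b c : ℝ, X = a•J1 + b•J2 + c•J3 := by
    intro X hX
    rw [show ({J1,J2,J3} : Set (Module.End ℝ V)) = insert J1 {J2, J3} from rfl,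
      Submodule.mem_span_insert] at hX
    obtain ⟨a, z, hz, hXz⟩ := hX
    rw [Submodule.mem_span_pair] at hz
    obtain ⟨b, c, hbc⟩ := hz
    exact ⟨a, b, c, by rw [hXz, ← hbc]; abel⟩
  obtain ⟨a1, b1, c1, hD1⟩ := span3 _ hF1
  obtain ⟨a2, b2, c2, hD2⟩ := span3 _ hF2
  obtain ⟨a3, b3, c3, hD3⟩ := span3 _ hF3
  have cyc : ∀ A B : Module.End ℝ V,
      LinearMap.trace ℝ V (A*(F*B)) = LinearMap.trace ℝ V ((B*A)*F) := by
    intro A B; rw [← mul_assoc, LinearMap.trace_mul_comm, ← mul_assoc]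
  have trcomb : ∀ (A : Module.End ℝ V) (a b c : ℝ),
      LinearMap.trace ℝ V (A*(a•J1 + b•J2 + c•J3))
        = a * LinearMap.trace ℝ V (A*J1) + b * LinearMap.trace ℝ V (A*J2)
          + c * LinearMap.trace ℝ V (A*J3) := by
    intro A a b c
    simp only [mul_add, mul_smul_comm, map_add, map_smul, smul_eq_mul]
  set t1 := LinearMap.trace ℝ V (J1*F) with ht1
  set t2 := LinearMap.trace ℝ V (J2*F) with ht2
  set t3 := LinearMap.trace ℝ V (J3*F) with ht3
  -- nine trace equations pinning the coefficients
  have ha1 : a1 = 0 := by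
    have L : LinearMap.trace ℝ V (J1*(F*J1 - J1*F)) = 0 := by
      rw [mul_sub, map_sub, cyc J1 J1, ← mul_assoc, h1, sub_self]
    have R : LinearMap.trace ℝ V (J1*(F*J1 - J1*F)) = a1*(4*(n:ℝ)) := by
      rw [hD1, trcomb, t11, t12, t13]; ring
    have h := L.symm.trans R
    have h4 : (4:ℝ)*(n:ℝ) ≠ 0 := by positivity
    rcases mul_eq_zero.mp h.symm with h' | h'
    · exact h'
    · exact absurd h' h4
  have hb1 : b1 = t3 / (2*(n:ℝ)) := by
    have L : LinearMap.trace ℝ V (J2*(F*J1 - J1*F)) = 2*t3 := by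
      rw [mul_sub, map_sub, cyc J2 J1, ← mul_assoc, h12, h21, neg_mul, map_neg,
        sub_neg_eq_add, ht3]; ring
    have R : LinearMap.trace ℝ V (J2*(F*J1 - J1*F)) = b1*(4*(n:ℝ)) := by
      rw [hD1, trcomb, t21, t22, t23]; ring
    have h := L.symm.trans R
    have h2n : (2*(n:ℝ)) ≠ 0 := by positivity
    rw [eq_div_iff h2n]
    linear_combination -h / 2
  have hc1 : c1 = -(t2 / (2*(n:ℝ))) := by
    have L : LinearMap.trace ℝ V (J3*(F*J1 - J1*F)) = 2*t2 := by
      rw [mul_sub, map_sub, cyc J3 J1, ← mul_assoc, h13, h31, neg_mul, map_neg,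
        sub_neg_eq_add, ht2]; ring
    have R : LinearMap.trace ℝ V (J3*(F*J1 - J1*F)) = c1*(-(4*(n:ℝ))) := by
      rw [hD1, trcomb, t31, t32, t33]; ring
    have h := L.symm.trans R
    have h2n : (2*(n:ℝ)) ≠ 0 := by positivity
    rw [← neg_div, eq_div_iff h2n]
    linear_combination h / 2
  have ha2 : a2 = -(t3 / (2*(n:ℝ))) := by
    have L : LinearMap.trace ℝ V (J1*(F*J2 - J2*F)) = -(2*t3) := by
      rw [mul_sub, map_sub, cyc J1 J2, ← mul_assoc, h21, h12, neg_mul, map_neg, ht3]; ring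
    have R : LinearMap.trace ℝ V (J1*(F*J2 - J2*F)) = a2*(4*(n:ℝ)) := by
      rw [hD2, trcomb, t11, t12, t13]; ring
    have h := L.symm.trans R
    have h2n : (2*(n:ℝ)) ≠ 0 := by positivity
    rw [← neg_div, eq_div_iff h2n]
    linear_combination -h / 2
  have hb2 : b2 = 0 := by
    have L : LinearMap.trace ℝ V (J2*(F*J2 - J2*F)) = 0 := by
      rw [mul_sub, map_sub, cyc J2 J2, ← mul_assoc, h2, sub_self]
    have R : LinearMap.trace ℝ V (J2*(F*J2 - J2*F)) = b2*(4*(n:ℝ)) := by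
      rw [hD2, trcomb, t21, t22, t23]; ring
    have h := L.symm.trans R
    have h4 : (4:ℝ)*(n:ℝ) ≠ 0 := by positivity
    rcases mul_eq_zero.mp h.symm with h' | h'
    · exact h'
    · exact absurd h' h4
  have hc2 : c2 = t1 / (2*(n:ℝ)) := by
    have L : LinearMap.trace ℝ V (J3*(F*J2 - J2*F)) = -(2*t1) := by
      rw [mul_sub, map_sub, cyc J3 J2, ← mul_assoc, h23, h32, neg_mul, map_neg, ht1]; ring
    have R : LinearMap.trace ℝ V (J3*(F*J2 - J2*F)) = c2*(-(4*(n:ℝ))) := by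
      rw [hD2, trcomb, t31, t32, t33]; ring
    have h := L.symm.trans R
    have h2n : (2*(n:ℝ)) ≠ 0 := by positivity
    rw [eq_div_iff h2n]
    linear_combination h / 2
  have ha3 : a3 = -(t2 / (2*(n:ℝ))) := by
    have L : LinearMap.trace ℝ V (J1*(F*J3 - J3*F)) = -(2*t2) := by
      rw [mul_sub, map_sub, cyc J1 J3, ← mul_assoc, h31, h13, neg_mul, map_neg, ht2]; ring
    have R : LinearMap.trace ℝ V (J1*(F*J3 - J3*F)) = a3*(4*(n:ℝ)) := by
      rw [hD3, trcomb, t11, t12, t13]; ring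
    have h := L.symm.trans R
    have h2n : (2*(n:ℝ)) ≠ 0 := by positivity
    rw [← neg_div, eq_div_iff h2n]
    linear_combination -h / 2
  have hb3 : b3 = t1 / (2*(n:ℝ)) := by
    have L : LinearMap.trace ℝ V (J2*(F*J3 - J3*F)) = 2*t1 := by
      rw [mul_sub, map_sub, cyc J2 J3, ← mul_assoc, h32, h23, neg_mul, map_neg,
        sub_neg_eq_add, ht1]; ring
    have R : LinearMap.trace ℝ V (J2*(F*J3 - J3*F)) = b3*(4*(n:ℝ)) := by
      rw [hD3, trcomb, t21, t22, t23]; ring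
    have h := L.symm.trans R
    have h2n : (2*(n:ℝ)) ≠ 0 := by positivity
    rw [eq_div_iff h2n]
    linear_combination -h / 2
  have hc3 : c3 = 0 := by
    have L : LinearMap.trace ℝ V (J3*(F*J3 - J3*F)) = 0 := by
      rw [mul_sub, map_sub, cyc J3 J3, ← mul_assoc, h3, sub_self]
    have R : LinearMap.trace ℝ V (J3*(F*J3 - J3*F)) = c3*(-(4*(n:ℝ))) := by
      rw [hD3, trcomb, t31, t32, t33]; ring
    have h := L.symm.trans R
    have h4 : -(4*(n:ℝ)) ≠ 0 := by simp [hn']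
    rcases mul_eq_zero.mp h.symm with h' | h'
    · exact h'
    · exact absurd h' h4
  -- the candidate decomposition
    -- r-values
  set r1 : ℝ := (1 / 2 : ℝ) * t1 with hr1
  set r2 : ℝ := (1 / 2 : ℝ) * t2 with hr2
  set r3 : ℝ := -(1 / 2 : ℝ) * t3 with hr3
  set S : Module.End ℝ V := ((2 * n : ℝ))⁻¹ • (r1 • J1 + r2 • J2 + r3 • J3) with hS
  set F0 : Module.End ℝ V := F - S with hF0
  have hdec : F = F0 + ((2 * n : ℝ))⁻¹ • (r1 • J1 + r2 • J2 + r3 • J3) := by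
    rw [hF0, hS]; abel
  have com1 : F0 * J1 = J1 * F0 := by
    have step : F0 * J1 - J1 * F0
        = (F*J1 - J1*F) - ((2 * n : ℝ))⁻¹ • (r1 • (J1*J1 - J1*J1)
            + r2 • (J2*J1 - J1*J2) + r3 • (J3*J1 - J1*J3)) := by
      rw [hF0, hS]
      simp only [sub_mul, mul_sub, add_mul, mul_add, smul_mul_assoc, mul_smul_comm,
        smul_add, smul_sub]
      abel
    have z : F0 * J1 - J1 * F0 = 0 := by
      rw [step, hD1, ha1, hb1, hc1, h1, h21, h12, h31, h13, hr2, hr3]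
      module
    have := sub_eq_zero.mp z
    exact this
  have com2 : F0 * J2 = J2 * F0 := by
    have step : F0 * J2 - J2 * F0
        = (F*J2 - J2*F) - ((2 * n : ℝ))⁻¹ • (r1 • (J1*J2 - J2*J1)
            + r2 • (J2*J2 - J2*J2) + r3 • (J3*J2 - J2*J3)) := by
      rw [hF0, hS]
      simp only [sub_mul, mul_sub, add_mul, mul_add, smul_mul_assoc, mul_smul_comm,
        smul_add, smul_sub]
      abel
    have z : F0 * J2 - J2 * F0 = 0 := by
      rw [step, hD2, ha2, hb2, hc2, h2, h12, h21, h32, h23, hr1, hr3]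
      module
    exact sub_eq_zero.mp z
  have com3 : F0 * J3 = J3 * F0 := by
    have step : F0 * J3 - J3 * F0
        = (F*J3 - J3*F) - ((2 * n : ℝ))⁻¹ • (r1 • (J1*J3 - J3*J1)
            + r2 • (J2*J3 - J3*J2) + r3 • (J3*J3 - J3*J3)) := by
      rw [hF0, hS]
      simp only [sub_mul, mul_sub, add_mul, mul_add, smul_mul_assoc, mul_smul_comm,
        smul_add, smul_sub]
      abel
    have z : F0 * J3 - J3 * F0 = 0 := by
      rw [step, hD3, ha3, hb3, hc3, h3, h13, h31, h23, h32, hr1, hr2]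
      module
    exact sub_eq_zero.mp z
  refine ⟨⟨(F0, r1, r2, r3), ⟨hdec, com1, com2, com3⟩, ?_⟩, key⟩
  rintro ⟨G, s1, s2, s3⟩ ⟨hGeq, hg1, hg2, hg3⟩
  obtain ⟨e1, e2, e3⟩ := key G s1 s2 s3 hGeq hg1 hg2 hg3
  have hs1 : s1 = r1 := by rw [e1, hr1, ht1]
  have hs2 : s2 = r2 := by rw [e2, hr2, ht2]
  have hs3 : s3 = r3 := by rw [e3, hr3, ht3]
  have hG : G = F0 := by
    have : G = F - ((2 * n : ℝ))⁻¹ • (s1 • J1 + s2 • J2 + s3 • J3) := by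
      rw [hGeq]; abel
    rw [this, hs1, hs2, hs3, hF0, hS]
  simp only [Prod.mk.injEq]
  exact ⟨hG, hs1, hs2, hs3⟩
end

section
/- Let V be a real vector space, K an ℝ-linear endomorphism of V with K∘K = ε·id_V where ε ∈ {1, −1}, and S : V → End_ℝ(V) any ℝ-linear map. Set D(X,Y) := S_X(Y) − S_Y(X). Then for all X, Y ∈ V: 4·D^{0,2}_K(X,Y) = [S_{KX}, K](Y) − K([S_X, K](Y)) − [S_{KY}, K](X) + K([S_Y, K](X)). (This is identity (3.8) in the proof of Corollary 3.4, expressing the difference of the (0,2)-parts of the torsions of two connections in terms of their difference tensor S.) -/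
/-- Identity (3.8): for `K` with `K ∘ K = ε • id`, `ε ∈ {1, −1}`, a linear
`S : V → End ℝ V` and `D(X,Y) := S_X Y − S_Y X`, one has
`4 D^{0,2}_K(X,Y) = [S_{KX},K]Y − K [S_X,K]Y − [S_{KY},K]X + K [S_Y,K]X`. -/
theorem torsion_difference_02_identity
    {V : Type*} [AddCommGroup V] [Module ℝ V]
    (ε : ℝ) (hε : ε = 1 ∨ ε = -1)
    (K : Module.End ℝ V) (hK : K * K = ε • (1 : Module.End ℝ V))
    (S : V →ₗ[ℝ] Module.End ℝ V)
    (D : V → V → V) (hD : ∀ X Y : V, D X Y = S X Y - S Y X) :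
    ∀ X Y : V,
      (4 : ℝ) • part02 ε K D X Y =
        (S (K X) * K - K * S (K X)) Y - K ((S X * K - K * S X) Y)
          - (S (K Y) * K - K * S (K Y)) X + K ((S Y * K - K * S Y) X) := by
  intro X Y
  have hK' : ∀ v : V, K (K v) = ε • v := by
    intro v
    have := congrArg (fun f : Module.End ℝ V => f v) hK
    simpa using this
  simp only [part02, hD, smul_sub, smul_add, map_sub, map_add, map_smul,
    Module.End.mul_apply, LinearMap.sub_apply, hK', smul_smul]
  module
end

section
/- Let V be a real vector space with a paraquaternionic triple (J₁, J₂, J₃), let S : V → End_ℝ(V) admit a decomposition S_X = S⁰_X + s¹(X)·J₁ + s²(X)·J₂ + s³(X)·J₃ with S⁰_X commuting with each Jₐ, and set D(X,Y) := S_X(Y) − S_Y(X). Then for all X, Y ∈ V (using the (0,2)-part with respect to J₂, for which ε = +1): 2·D^{0,2}_{J₂}(X,Y) = (s¹(X) + s³(J₂X))·J₁Y + (s¹(J₂X) + s³(X))·J₃Y − (s¹(Y) + s³(J₂Y))·J₁X − (s¹(J₂Y) + s³(Y))·J₃X. (This is identity (3.9) in the proof of Corollary 3.4.) -/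
/-- Identity (3.9): for a paraquaternionic triple `(J₁, J₂, J₃)` and
`S_X = S⁰_X + s¹(X)J₁ + s²(X)J₂ + s³(X)J₃` with `S⁰_X` commuting with each `Jₐ`,
setting `D(X,Y) = S_X Y − S_Y X`, one has (with `ε = +1` for `J₂`)
`2 D^{0,2}_{J₂}(X,Y) = (s¹(X)+s³(J₂X)) J₁Y + (s¹(J₂X)+s³(X)) J₃Y`
`− (s¹(Y)+s³(J₂Y)) J₁X − (s¹(J₂Y)+s³(Y)) J₃X`. -/
theorem torsion_difference_02_J2_formula
    {V : Type*} [AddCommGroup V] [Module ℝ V]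
    (J1 J2 J3 : Module.End ℝ V)
    (h1 : J1 * J1 = 1) (h2 : J2 * J2 = 1) (h3 : J3 * J3 = -1)
    (h12 : J1 * J2 = J3) (h21 : J2 * J1 = -J3)
    (S : V →ₗ[ℝ] Module.End ℝ V)
    (S0 : V → Module.End ℝ V) (s1 s2 s3 : V →ₗ[ℝ] ℝ)
    (hS : ∀ X : V, S X = S0 X + s1 X • J1 + s2 X • J2 + s3 X • J3)
    (hc1 : ∀ X : V, Commute (S0 X) J1) (hc2 : ∀ X : V, Commute (S0 X) J2)
    (hc3 : ∀ X : V, Commute (S0 X) J3)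
    (D : V → V → V) (hD : ∀ X Y : V, D X Y = S X Y - S Y X) :
    ∀ X Y : V,
      (2 : ℝ) • part02 1 J2 D X Y =
        (s1 X + s3 (J2 X)) • J1 Y + (s1 (J2 X) + s3 X) • J3 Y
          - (s1 Y + s3 (J2 Y)) • J1 X - (s1 (J2 Y) + s3 Y) • J3 X := by

  intro X Y
  have h2' : ∀ v : V, J2 (J2 v) = v := fun v => by
    simpa using DFunLike.congr_fun h2 v
  have h12' : ∀ v : V, J1 (J2 v) = J3 v := fun v => by
    simpa using DFunLike.congr_fun h12 v
  have h21' : ∀ v : V, J2 (J1 v) = -(J3 v) := fun v => by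
    simpa using DFunLike.congr_fun h21 v
  have h32 : J3 * J2 = J1 := by
    calc J3 * J2 = J1 * J2 * J2 := by rw [h12]
    _ = J1 := by rw [mul_assoc, h2, mul_one]
  have h23 : J2 * J3 = -J1 := by
    calc J2 * J3 = J2 * (J1 * J2) := by rw [h12]
    _ = (J2 * J1) * J2 := by rw [mul_assoc]
    _ = -(J3 * J2) := by rw [h21]; simp [mul_assoc]
    _ = -J1 := by rw [h32]
  have h32' : ∀ v : V, J3 (J2 v) = J1 v := fun v => by
    simpa using DFunLike.congr_fun h32 v
  have h23' : ∀ v : V, J2 (J3 v) = -(J1 v) := fun v => by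
    simpa using DFunLike.congr_fun h23 v
  have hc2' : ∀ (a v : V), J2 (S0 a v) = S0 a (J2 v) := fun a v => by
    simpa using DFunLike.congr_fun (hc2 a).symm v
  simp only [part02, hD, hS, one_smul, LinearMap.add_apply, LinearMap.smul_apply,
    map_add, map_sub, map_smul, map_neg, h2', h12', h21', h32', h23', hc2',
    smul_neg]
  module
end

section
/- Let V be a real vector space of dimension 4n (n ≥ 1) with a paraquaternionic triple (J₁, J₂, J₃), let S : V → End_ℝ(V) admit a decomposition S_X = S⁰_X + s¹(X)·J₁ + s²(X)·J₂ + s³(X)·J₃ with S⁰_X commuting with each Jₐ, and set D(X,Y) := S_X(Y) − S_Y(X). Then: (a) D^{0,2}_{J₂} vanishes identically if and only if s¹(J₁X) = s³(J₃X) for all X ∈ V; and (b) D^{0,2}_{J₁} vanishes identically if and only if s²(J₂X) = s³(J₃X) for all X ∈ V. (These are the two equivalences established in the proof of Corollary 3.4.) -/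
open LinearMap Module TensorProduct



section Aux
variable {V : Type*} [AddCommGroup V] [Module ℝ V] [FiniteDimensional ℝ V]

private lemma trace_smulRight' (f : V →ₗ[ℝ] ℝ) (v : V) :
    trace ℝ V (f.smulRight v) = f v := by
  have h : f.smulRight v = dualTensorHom ℝ V V (f ⊗ₜ v) := by
    ext x; simp [dualTensorHom_apply]
  rw [h, trace_eq_contract_apply, contractLeft_apply]

omit [FiniteDimensional ℝ V] in
private lemma mul_smulRight' (P : Module.End ℝ V) (f : V →ₗ[ℝ] ℝ) (v : V) :
    P * (f.smulRight v) = f.smulRight (P v) := by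
  ext x; simp [Module.End.mul_apply]

end Aux

section Aux2
variable {V : Type*} [AddCommGroup V] [Module ℝ V] [FiniteDimensional ℝ V]

private lemma aux_main (n : ℕ) (hn : 1 ≤ n) (hdim : Module.finrank ℝ V = 4 * n)
    (K P Q : Module.End ℝ V) (σ : ℝ) (hσ : σ * σ = 1)
    (hKK : K * K = 1) (hPP : P * P = 1)
    (hPK : P * K = σ • Q) (hQK : Q * K = σ • P)
    (hPQ : P * Q = σ • K)
    (hKP : K * P = -(σ • Q)) (hKQ : K * Q = -(σ • P))
    (S0 : V → Module.End ℝ V) (fP fQ fK : V →ₗ[ℝ] ℝ)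
    (hcK : ∀ X, Commute (S0 X) K)
    (D : V → V → V)
    (hD : ∀ X Y, D X Y = (S0 X) Y + fP X • P Y + fQ X • Q Y + fK X • K Y
        - ((S0 Y) X + fP Y • P X + fQ Y • Q X + fK Y • K X)) :
    (∀ X Y, part02 1 K D X Y = 0) ↔ ∀ X, fP X + σ * fQ (K X) = 0 := by
  -- pointwise consequences
  have aKK : ∀ v : V, K (K v) = v := fun v => by
    have := LinearMap.congr_fun hKK v; simpa [Module.End.mul_apply] using this
  have aPP : ∀ v : V, P (P v) = v := fun v => by
    have := LinearMap.congr_fun hPP v; simpa [Module.End.mul_apply] using this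
  have aPK : ∀ v : V, P (K v) = σ • Q v := fun v => by
    have := LinearMap.congr_fun hPK v; simpa [Module.End.mul_apply] using this
  have aQK : ∀ v : V, Q (K v) = σ • P v := fun v => by
    have := LinearMap.congr_fun hQK v; simpa [Module.End.mul_apply] using this
  have aKP : ∀ v : V, K (P v) = -(σ • Q v) := fun v => by
    have := LinearMap.congr_fun hKP v; simpa [Module.End.mul_apply] using this
  have aKQ : ∀ v : V, K (Q v) = -(σ • P v) := fun v => by
    have := LinearMap.congr_fun hKQ v; simpa [Module.End.mul_apply] using this
  have aPQ : ∀ v : V, P (Q v) = σ • K v := fun v => by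
    have := LinearMap.congr_fun hPQ v; simpa [Module.End.mul_apply] using this
  have aSK : ∀ (Z : V) (v : V), K ((S0 Z) v) = (S0 Z) (K v) := fun Z v => by
    have := LinearMap.congr_fun (hcK Z).symm v
    simpa [Module.End.mul_apply] using this
  -- the key formula
  have key : ∀ X Y : V, part02 1 K D X Y =
      (2⁻¹ : ℝ) • ((fP X + σ * fQ (K X)) • P Y - (fP Y + σ * fQ (K Y)) • P X
        + (σ * fP (K X) + σ * σ * fQ X) • Q Y - (σ * fP (K Y) + σ * σ * fQ Y) • Q X) := by
    intro X Y
    rcases mul_self_eq_one_iff.mp hσ with rfl | rfl <;>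
      · simp only [part02, hD, one_smul, map_add, map_sub, map_smul, map_neg, aSK, aKK, aPK, aQK,
          aKP, aKQ, aPP, smul_neg, neg_smul, smul_add, smul_sub, smul_smul]
        module
  constructor
  · intro h X
    set gl : V →ₗ[ℝ] ℝ := fP + σ • (fQ.comp K) with hgl
    have hglv : ∀ v, gl v = fP v + σ * fQ (K v) := fun v => by
      simp [hgl, smul_eq_mul]
    have E : ∀ Y : V, gl X • P Y + (σ * gl (K X)) • Q Y - gl Y • P X
        - (σ * gl (K Y)) • Q X = 0 := by
      intro Y
      have h0 := h X Y
      rw [key X Y] at h0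
      have h1 : (fP X + σ * fQ (K X)) • P Y - (fP Y + σ * fQ (K Y)) • P X
          + (σ * fP (K X) + σ * σ * fQ X) • Q Y - (σ * fP (K Y) + σ * σ * fQ Y) • Q X = 0 := by
        have := smul_eq_zero.mp h0
        rcases this with h' | h'
        · norm_num at h'
        · exact h'
      have c1 : gl X = fP X + σ * fQ (K X) := hglv X
      have c2 : gl Y = fP Y + σ * fQ (K Y) := hglv Y
      have c3 : σ * gl (K X) = σ * fP (K X) + σ * σ * fQ X := by
        rw [hglv (K X), aKK]; ring
      have c4 : σ * gl (K Y) = σ * fP (K Y) + σ * σ * fQ Y := by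
        rw [hglv (K Y), aKK]; ring
      rw [c1, c2, c3, c4]
      linear_combination (norm := module) h1
    -- assemble the endomorphism and take traces
    set M : Module.End ℝ V := gl X • P + (σ * gl (K X)) • Q - gl.smulRight (P X)
        - (σ • (gl.comp K)).smulRight (Q X) with hM
    have hM0 : M = 0 := by
      ext Y
      have := E Y
      simpa [hM, LinearMap.smul_apply, LinearMap.sub_apply, LinearMap.add_apply,
        smul_smul, smul_eq_mul, sub_eq_zero] using this
    have htrK : trace ℝ V K = 0 := by
      have e1 : P * (K * P) = -K := by
        rw [hKP, mul_neg, mul_smul_comm, hPQ, smul_smul, hσ, one_smul]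
      have e2 : trace ℝ V K = - trace ℝ V K := by
        conv_lhs => rw [← mul_one K, ← hPP, ← mul_assoc]
        rw [trace_mul_comm, e1, map_neg]
      linarith
    have hPM : P * M = gl X • (P * P) + (σ * gl (K X)) • (P * Q) - gl.smulRight X
        - (σ • (gl.comp K)).smulRight (σ • K X) := by
      rw [hM, mul_sub, mul_sub, mul_add, mul_smul_comm, mul_smul_comm,
        mul_smulRight', mul_smulRight', aPP, aPQ]
    have htr0 : trace ℝ V (P * M) = 0 := by rw [hM0, mul_zero, map_zero]
    rw [hPM] at htr0
    simp only [map_add, map_sub, map_smul, hPP, hPQ, trace_one, trace_smulRight', htrK, hdim,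
      LinearMap.smul_apply, LinearMap.comp_apply, aKK, smul_eq_mul, hglv] at htr0
    have key2 : (fP X + σ * fQ (K X)) * ((4 * n : ℝ) - 2) = 0 := by
      push_cast at htr0
      linear_combination htr0 + (fP X + σ * fQ (K X)) * hσ
    rcases mul_eq_zero.mp key2 with h' | h'
    · exact h'
    · exfalso
      have hn' : (1 : ℝ) ≤ (n : ℝ) := by exact_mod_cast hn
      linarith
  · intro hc X Y
    rw [key X Y]
    have c1 := hc X
    have c2 := hc Y
    have c3 := hc (K X)
    have c4 := hc (K Y)
    rw [aKK] at c3 c4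
    have d3 : σ * fP (K X) + σ * σ * fQ X = 0 := by linear_combination σ * c3
    have d4 : σ * fP (K Y) + σ * σ * fQ Y = 0 := by linear_combination σ * c4
    rw [c1, c2, d3, d4]
    simp

end Aux2

/-- The two equivalences from the proof of Corollary 3.4: for a paraquaternionic triple
`(J₁, J₂, J₃)` on a real vector space of dimension `4n`, `n ≥ 1`, and
`S_X = S⁰_X + s¹(X)J₁ + s²(X)J₂ + s³(X)J₃` with `S⁰_X` commuting with each `Jₐ`,
`D(X,Y) := S_X Y − S_Y X`:
(a) `D^{0,2}_{J₂} ≡ 0 ↔ s¹(J₁X) = s³(J₃X)` for all `X`;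
(b) `D^{0,2}_{J₁} ≡ 0 ↔ s²(J₂X) = s³(J₃X)` for all `X`. -/
theorem torsion_difference_02_vanishing_iff
    {V : Type*} [AddCommGroup V] [Module ℝ V] [FiniteDimensional ℝ V]
    (n : ℕ) (hn : 1 ≤ n) (hdim : Module.finrank ℝ V = 4 * n)
    (J1 J2 J3 : Module.End ℝ V)
    (h1 : J1 * J1 = 1) (h2 : J2 * J2 = 1) (h3 : J3 * J3 = -1)
    (h12 : J1 * J2 = J3) (h21 : J2 * J1 = -J3)
    (S : V →ₗ[ℝ] Module.End ℝ V)
    (S0 : V → Module.End ℝ V) (s1 s2 s3 : V →ₗ[ℝ] ℝ)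
    (hS : ∀ X : V, S X = S0 X + s1 X • J1 + s2 X • J2 + s3 X • J3)
    (hc1 : ∀ X : V, Commute (S0 X) J1) (hc2 : ∀ X : V, Commute (S0 X) J2)
    (hc3 : ∀ X : V, Commute (S0 X) J3)
    (D : V → V → V) (hD : ∀ X Y : V, D X Y = S X Y - S Y X) :
    ((∀ X Y : V, part02 1 J2 D X Y = 0) ↔ (∀ X : V, s1 (J1 X) = s3 (J3 X))) ∧
    ((∀ X Y : V, part02 1 J1 D X Y = 0) ↔ (∀ X : V, s2 (J2 X) = s3 (J3 X))) := by
  have h13 : J1 * J3 = J2 := by rw [← h12, ← mul_assoc, h1, one_mul]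
  have h32 : J3 * J2 = J1 := by rw [← h12, mul_assoc, h2, mul_one]
  have h31 : J3 * J1 = -J2 := by
    rw [← h12, mul_assoc, h21, mul_neg, h13]
  have h23 : J2 * J3 = -J1 := by
    rw [← h12, ← mul_assoc, h21, neg_mul, h32]
  have app : ∀ (A B C : Module.End ℝ V), A * B = C → ∀ v : V, A (B v) = C v :=
    fun A B C h v => by rw [← Module.End.mul_apply, h]
  have a11 : ∀ v : V, J1 (J1 v) = v := fun v => app _ _ _ h1 v
  have a22 : ∀ v : V, J2 (J2 v) = v := fun v => app _ _ _ h2 v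
  have a21 : ∀ v : V, J2 (J1 v) = -(J3 v) := fun v => by
    rw [app _ _ _ h21 v, LinearMap.neg_apply]
  have a31 : ∀ v : V, J3 (J1 v) = -(J2 v) := fun v => by
    rw [app _ _ _ h31 v, LinearMap.neg_apply]
  have a12 : ∀ v : V, J1 (J2 v) = J3 v := fun v => app _ _ _ h12 v
  have a32 : ∀ v : V, J3 (J2 v) = J1 v := fun v => app _ _ _ h32 v
  constructor
  · have hD' : ∀ X Y : V, D X Y = (S0 X) Y + s1 X • J1 Y + s3 X • J3 Y + s2 X • J2 Y
        - ((S0 Y) X + s1 Y • J1 X + s3 Y • J3 X + s2 Y • J2 X) := by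
      intro X Y
      rw [hD X Y, hS X, hS Y]
      simp only [LinearMap.add_apply, LinearMap.smul_apply]
      abel
    have base := aux_main n hn hdim J2 J1 J3 1 (by norm_num)
      h2 h1 (by rw [one_smul]; exact h12) (by rw [one_smul]; exact h32)
      (by rw [one_smul]; exact h13) (by rw [one_smul]; exact h21)
      (by rw [one_smul]; exact h23) S0 s1 s3 s2 hc2 D hD'
    rw [base]
    constructor
    · intro hg X
      have e := hg (J1 X)
      rw [one_mul, a21 X, map_neg] at e
      linarith
    · intro hg X
      have e := hg (J1 X)
      rw [a11 X, a31 X, map_neg] at e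
      rw [one_mul, e]
      ring
  · have hD' : ∀ X Y : V, D X Y = (S0 X) Y + s2 X • J2 Y + s3 X • J3 Y + s1 X • J1 Y
        - ((S0 Y) X + s2 Y • J2 X + s3 Y • J3 X + s1 Y • J1 X) := by
      intro X Y
      rw [hD X Y, hS X, hS Y]
      simp only [LinearMap.add_apply, LinearMap.smul_apply]
      abel
    have base := aux_main n hn hdim J1 J2 J3 (-1) (by norm_num)
      h1 h2 (by rw [neg_one_smul]; exact h21) (by rw [neg_one_smul]; exact h31)
      (by rw [neg_one_smul]; exact h23) (by rw [neg_one_smul, neg_neg]; exact h12)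
      (by rw [neg_one_smul, neg_neg]; exact h13) S0 s2 s3 s1 hc1 D hD'
    rw [base]
    constructor
    · intro hg X
      have e := hg (J2 X)
      rw [a12 X] at e
      linarith
    · intro hg X
      have e := hg (J2 X)
      rw [a22 X, a32 X] at e
      rw [e]
      ring
end

section
/- Let V be a real vector space with a paraquaternionic triple (J₁, J₂, J₃) and let B : V × V → V be an alternating ℝ-bilinear map. If B^{0,2}_{J₃} = 0 and B^{0,2}_{J_t} = 0 for every t ∈ ℝ, where J_t := sinh(t)·J₁ + cosh(t)·J₃ (each J_t satisfies J_t² = −id_V), then B^{0,2}_{J₁} = 0. (This is the computation carried out in the proof of Lemma 3.1.) -/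
/-- The computation in the proof of Lemma 3.1: if the `(0,2)`-part of an alternating
bilinear `B` vanishes with respect to `J₃` and with respect to every almost complex
structure `J_t = sinh t · J₁ + cosh t · J₃`, then it vanishes with respect to `J₁`
(taking `ε = −1` for `J₃` and each `J_t`, and `ε = +1` for `J₁`). -/
theorem part02_J1_vanishes_of_Jt
    {V : Type*} [AddCommGroup V] [Module ℝ V]
    (J1 J2 J3 : Module.End ℝ V)
    (h1 : J1 * J1 = 1) (h2 : J2 * J2 = 1) (h3 : J3 * J3 = -1)
    (h12 : J1 * J2 = J3) (h21 : J2 * J1 = -J3)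
    (B : V →ₗ[ℝ] V →ₗ[ℝ] V) (halt : ∀ X : V, B X X = 0)
    (h0 : ∀ X Y : V, part02 (-1) J3 (fun X Y => B X Y) X Y = 0)
    (ht : ∀ (t : ℝ) (X Y : V),
      part02 (-1) (Real.sinh t • J1 + Real.cosh t • J3) (fun X Y => B X Y) X Y = 0) :
    ∀ X Y : V, part02 1 J1 (fun X Y => B X Y) X Y = 0 := by
  intro X Y
  have hc2 : Real.cosh 1 ^ 2 = Real.sinh 1 ^ 2 + 1 := Real.cosh_sq 1
  have hs : Real.sinh 1 ≠ 0 := ne_of_gt (Real.sinh_pos_iff.mpr one_pos)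
  have key : part02 1 J1 (fun X Y => B X Y) X Y =
      (Real.sinh 1 ^ 2)⁻¹ •
        ((2⁻¹ : ℝ) • part02 (-1) (Real.sinh 1 • J1 + Real.cosh 1 • J3) (fun X Y => B X Y) X Y
          + (2⁻¹ : ℝ) • part02 (-1) (Real.sinh (-1) • J1 + Real.cosh (-1) • J3) (fun X Y => B X Y) X Y
          - (Real.cosh 1 ^ 2) • part02 (-1) J3 (fun X Y => B X Y) X Y) := by
    simp only [part02, Real.sinh_neg, Real.cosh_neg, LinearMap.add_apply, LinearMap.smul_apply,
      LinearMap.neg_apply, map_add, map_smul, map_neg, neg_smul, one_smul, neg_neg]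
    match_scalars <;> field_simp <;> ring_nf <;> nlinarith [hc2, sq_nonneg (Real.sinh 1)]
  rw [key, ht 1 X Y, ht (-1) X Y, h0 X Y]
  simp
end
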